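/- arXiv:1004.1715 — 7 statements merged into one kernel-verified Lean document; each statement's English description precedes it below -/
import Mathlib

section
/- If a, b ∈ ℝ satisfy a < 1 and a + b > 1, then there is a constant C depending only on a and b such that for all f, g ∈ L²(ℝ²), ‖|D|^{-a}⟨D⟩^{-b}(fg)‖_{L²} ≤ C ‖f‖_{L²} ‖g‖_{L²}. -/
/- STATEMENT 1 (Sobolev product estimate, Lemma `SobolevLemma`):
   if a < 1 and a + b > 1 then ‖|D|^{-a}⟨D⟩^{-b}(fg)‖_{L²} ≤ C_{a,b}‖f‖_{L²}‖g‖_{L²}.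
   Formalized on the Fourier side via Plancherel: for `f, g` the Fourier transforms
   (arbitrary L² functions, by Plancherel), the Fourier transform of the product is the
   convolution `ξ ↦ ∫ f(η) g(ξ-η) dη`, and the multiplier acts by multiplication by
   `|ξ|^{-a}⟨ξ⟩^{-b}`. -/

open MeasureTheory Real
open scoped ENNReal

noncomputable section

open Set Metric NNReal in
lemma lintegral_fun_norm_addHaar' {E : Type*} [NormedAddCommGroup E] [NormedSpace ℝ E]
    [MeasurableSpace E] [BorelSpace E] [FiniteDimensional ℝ E] [Nontrivial E]
    (μ : Measure E) [μ.IsAddHaarMeasure] (F : ℝ → ℝ≥0∞) (hF : Measurable F) :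
    ∫⁻ x, F ‖x‖ ∂μ = μ.toSphere univ *
      ∫⁻ r in Ioi (0:ℝ), ENNReal.ofReal (r ^ (Module.finrank ℝ E - 1)) * F r := by
  have h0 : μ ({0} : Set E) = 0 := measure_singleton 0
  calc ∫⁻ x, F ‖x‖ ∂μ = ∫⁻ x in ({0}ᶜ : Set E), F ‖x‖ ∂μ := by
        rw [← lintegral_add_compl (fun x => F ‖x‖) (measurableSet_singleton (0:E)),
          setLIntegral_measure_zero _ _ h0, zero_add]
    _ = ∫⁻ x : ({0}ᶜ : Set E), F ‖x.1‖ ∂(μ.comap Subtype.val) := by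
        exact (lintegral_subtype_comap (measurableSet_singleton (0:E)).compl (fun x => F ‖x‖)).symm
    _ = ∫⁻ p : sphere (0:E) 1 × Ioi (0:ℝ), F p.2.1
          ∂(μ.toSphere.prod (Measure.volumeIoiPow (Module.finrank ℝ E - 1))) := by
        rw [← (μ.measurePreserving_homeomorphUnitSphereProd).lintegral_comp_emb
          (Homeomorph.measurableEmbedding _) (fun p => F p.2.1)]
        simp only [homeomorphUnitSphereProd_apply_snd_coe]
    _ = μ.toSphere univ * ∫⁻ r : Ioi (0:ℝ), F r.1 ∂(Measure.volumeIoiPow (Module.finrank ℝ E - 1)) := by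
        rw [lintegral_prod (fun p : sphere (0:E) 1 × Ioi (0:ℝ) => F p.2.1)
          ((hF.comp (measurable_subtype_coe.comp measurable_snd)).aemeasurable)]
        simp [lintegral_const, mul_comm]
    _ = μ.toSphere univ * ∫⁻ r in Ioi (0:ℝ), ENNReal.ofReal (r ^ (Module.finrank ℝ E - 1)) * F r := by
        congr 1
        have hg : Measurable fun r : Ioi (0:ℝ) => F r.1 := hF.comp measurable_subtype_coe
        rw [Measure.volumeIoiPow, lintegral_withDensity_eq_lintegral_mul _
          (by fun_prop) hg]
        simp only [Pi.mul_apply]; exact lintegral_subtype_comap measurableSet_Ioi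
          (fun r => ENNReal.ofReal (r ^ (Module.finrank ℝ E - 1)) * F r)

open Set Metric NNReal in
lemma one_dim_finite (a b : ℝ) (ha : a < 1) (hab : 1 < a + b) :
    ∫⁻ r in Ioi (0:ℝ), ENNReal.ofReal (r ^ (1:ℕ)) *
      ((‖(r ^ (-a) * (1 + r^2)^(-(b/2)) : ℝ)‖₊ : ℝ≥0∞) ^ (2:ℝ)) < ∞ := by
  set c : ℝ := max 1 ((2:ℝ) ^ (-b)) with hc
  have hc1 : (1:ℝ) ≤ c := le_max_left _ _
  have hc0 : (0:ℝ) ≤ c := zero_le_one.trans hc1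
  -- rewrite the integrand for r > 0
  have key : ∀ r : ℝ, 0 < r → ENNReal.ofReal (r ^ (1:ℕ)) *
      ((‖(r ^ (-a) * (1 + r^2)^(-(b/2)) : ℝ)‖₊ : ℝ≥0∞) ^ (2:ℝ))
      = ENNReal.ofReal (r ^ (1 + (-a)*2) * (1 + r^2) ^ (-b)) := by
    intro r hr
    have h1 : (0:ℝ) ≤ 1 + r^2 := by positivity
    have hx : (0:ℝ) ≤ r ^ (-a) * (1 + r^2)^(-(b/2)) := by positivity
    rw [← enorm_eq_nnnorm, ← ofReal_norm_eq_enorm, Real.norm_of_nonneg hx,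
      ENNReal.ofReal_rpow_of_nonneg hx (by norm_num : (0:ℝ) ≤ 2),
      ← ENNReal.ofReal_mul (by positivity)]
    congr 1
    rw [Real.mul_rpow (by positivity) (by positivity),
      ← Real.rpow_mul hr.le, ← Real.rpow_mul h1, pow_one,
      show -(b/2)*2 = -b by ring, ← mul_assoc]
    congr 1
    rw [Real.rpow_add hr, Real.rpow_one]
  calc ∫⁻ r in Ioi (0:ℝ), ENNReal.ofReal (r ^ (1:ℕ)) *
        ((‖(r ^ (-a) * (1 + r^2)^(-(b/2)) : ℝ)‖₊ : ℝ≥0∞) ^ (2:ℝ))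
      ≤ ∫⁻ r in Ioc (0:ℝ) 1 ∪ Ioi 1, ENNReal.ofReal (r ^ (1:ℕ)) *
        ((‖(r ^ (-a) * (1 + r^2)^(-(b/2)) : ℝ)‖₊ : ℝ≥0∞) ^ (2:ℝ)) :=
        lintegral_mono_set Ioi_subset_Ioc_union_Ioi
    _ ≤ (∫⁻ r in Ioc (0:ℝ) 1, ENNReal.ofReal (r ^ (1:ℕ)) *
        ((‖(r ^ (-a) * (1 + r^2)^(-(b/2)) : ℝ)‖₊ : ℝ≥0∞) ^ (2:ℝ)))
        + ∫⁻ r in Ioi (1:ℝ), ENNReal.ofReal (r ^ (1:ℕ)) *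
        ((‖(r ^ (-a) * (1 + r^2)^(-(b/2)) : ℝ)‖₊ : ℝ≥0∞) ^ (2:ℝ)) :=
        lintegral_union_le _ _ _
    _ < ∞ := by
        rw [ENNReal.add_lt_top]
        constructor
        · calc ∫⁻ r in Ioc (0:ℝ) 1, ENNReal.ofReal (r ^ (1:ℕ)) *
              ((‖(r ^ (-a) * (1 + r^2)^(-(b/2)) : ℝ)‖₊ : ℝ≥0∞) ^ (2:ℝ))
              ≤ ∫⁻ r in Ioc (0:ℝ) 1, ENNReal.ofReal (c * r ^ (1 + (-a)*2)) := by
                refine setLIntegral_mono' measurableSet_Ioc fun r hr => ?_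
                rw [key r hr.1]
                apply ENNReal.ofReal_le_ofReal
                have hb : (1 + r^2) ^ (-b) ≤ c := by
                  rcases le_or_gt b 0 with h | h
                  · refine le_trans ?_ (le_max_right _ _)
                    refine Real.rpow_le_rpow (by positivity) ?_ (by linarith)
                    nlinarith [hr.2, hr.1.le, sq_nonneg r]
                  · refine le_trans ?_ hc1
                    exact Real.rpow_le_one_of_one_le_of_nonpos (by nlinarith [sq_nonneg r]) (by linarith)
                calc r ^ (1 + (-a)*2) * (1 + r^2) ^ (-b) ≤ r ^ (1 + (-a)*2) * c :=
                      mul_le_mul_of_nonneg_left hb (Real.rpow_nonneg hr.1.le _)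
                  _ = c * r ^ (1 + (-a)*2) := mul_comm _ _
            _ < ∞ := by
                apply IntegrableOn.setLIntegral_lt_top
                have h1 : IntegrableOn (fun r : ℝ => r ^ (1 + (-a)*2)) (Ioc (0:ℝ) 1) volume := by
                  rw [← intervalIntegrable_iff_integrableOn_Ioc_of_le zero_le_one]
                  exact intervalIntegral.intervalIntegrable_rpow' (by linarith)
                exact h1.const_mul c
        · calc ∫⁻ r in Ioi (1:ℝ), ENNReal.ofReal (r ^ (1:ℕ)) *
              ((‖(r ^ (-a) * (1 + r^2)^(-(b/2)) : ℝ)‖₊ : ℝ≥0∞) ^ (2:ℝ))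
              ≤ ∫⁻ r in Ioi (1:ℝ), ENNReal.ofReal (c * r ^ (1 + (-a)*2 + (-b)*2)) := by
                refine setLIntegral_mono' measurableSet_Ioi fun r hr => ?_
                have hr1 : (1:ℝ) ≤ r := le_of_lt hr
                have hr0 : (0:ℝ) < r := lt_of_lt_of_le zero_lt_one hr1
                rw [key r hr0]
                apply ENNReal.ofReal_le_ofReal
                have hrsq : r ^ (2:ℝ) = r ^ 2 := by
                  rw [← Real.rpow_natCast r 2]; norm_num
                have hb : (1 + r^2) ^ (-b) ≤ c * r ^ ((-b)*2) := by
                  have hrb : r ^ ((-b)*2) = (r^2) ^ (-b) := by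
                    rw [← hrsq, ← Real.rpow_mul hr0.le]; ring_nf
                  rcases le_or_gt b 0 with h | h
                  · calc (1 + r^2) ^ (-b) ≤ (2 * r^2) ^ (-b) :=
                          Real.rpow_le_rpow (by positivity) (by nlinarith) (by linarith)
                      _ = 2 ^ (-b) * (r^2) ^ (-b) :=
                          Real.mul_rpow (by norm_num) (by positivity)
                      _ ≤ c * r ^ ((-b)*2) := by
                          rw [hrb]
                          exact mul_le_mul_of_nonneg_right (le_max_right _ _) (by positivity)
                  · calc (1 + r^2) ^ (-b) ≤ (r^2) ^ (-b) := by
                          apply Real.rpow_le_rpow_of_nonpos (by positivity) (by nlinarith) (by linarith)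
                      _ ≤ c * r ^ ((-b)*2) := by
                          rw [hrb]
                          nlinarith [Real.rpow_nonneg (by positivity : (0:ℝ) ≤ r^2) (-b)]
                calc r ^ (1 + (-a)*2) * (1 + r^2) ^ (-b)
                    ≤ r ^ (1 + (-a)*2) * (c * r ^ ((-b)*2)) :=
                      mul_le_mul_of_nonneg_left hb (Real.rpow_nonneg hr0.le _)
                  _ = c * (r ^ (1 + (-a)*2) * r ^ ((-b)*2)) := by ring
                  _ = c * r ^ (1 + (-a)*2 + (-b)*2) := by
                      rw [← Real.rpow_add hr0]
            _ < ∞ := by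
                apply IntegrableOn.setLIntegral_lt_top
                exact (integrableOn_Ioi_rpow_of_lt (by linarith) zero_lt_one).const_mul c

open Set Metric NNReal in
theorem sobolev_product_estimate (a b : ℝ) (ha : a < 1) (hab : 1 < a + b) :
    ∃ C : ℝ, 0 < C ∧ ∀ f g : EuclideanSpace ℝ (Fin 2) → ℂ,
      MemLp f 2 volume → MemLp g 2 volume →
      eLpNorm (fun ξ : EuclideanSpace ℝ (Fin 2) =>
          (((‖ξ‖ ^ (-a) * (1 + ‖ξ‖ ^ 2) ^ (-(b/2)) : ℝ)) : ℂ) *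
            ∫ η : EuclideanSpace ℝ (Fin 2), f η * g (ξ - η)) 2 volume
        ≤ ENNReal.ofReal C * (eLpNorm f 2 volume * eLpNorm g 2 volume) := by
  have hFmeas : Measurable fun r : ℝ =>
      ((‖(r ^ (-a) * (1 + r^2)^(-(b/2)) : ℝ)‖₊ : ℝ≥0∞) ^ (2:ℝ)) := by
    fun_prop
  set M : ℝ≥0∞ := ∫⁻ ξ : EuclideanSpace ℝ (Fin 2),
      ((‖(‖ξ‖ ^ (-a) * (1 + ‖ξ‖ ^ 2) ^ (-(b/2)) : ℝ)‖₊ : ℝ≥0∞) ^ (2:ℝ)) ∂volume with hM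
  have hMfin : M < ∞ := by
    rw [hM, lintegral_fun_norm_addHaar' volume _ hFmeas]
    refine ENNReal.mul_lt_top (measure_lt_top _ _) ?_
    have h2 : Module.finrank ℝ (EuclideanSpace ℝ (Fin 2)) - 1 = 1 := by
      simp [finrank_euclideanSpace_fin]
    rw [h2]
    exact one_dim_finite a b ha hab
  have hM2 : M ^ (1/2:ℝ) ≠ ∞ := by
    exact (ENNReal.rpow_lt_top_of_nonneg (by norm_num) hMfin.ne).ne
  refine ⟨(M ^ (1/2:ℝ)).toReal + 1, by positivity, fun f g hf hg => ?_⟩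
  set Nf := eLpNorm f 2 volume
  set Ng := eLpNorm g 2 volume
  have hNf : Nf ≠ ∞ := hf.eLpNorm_ne_top
  have hNg : Ng ≠ ∞ := hg.eLpNorm_ne_top
  have hconj : Real.HolderConjugate 2 2 := Real.HolderConjugate.two_two
  have heLp : ∀ h : EuclideanSpace ℝ (Fin 2) → ℂ,
      eLpNorm h 2 volume = (∫⁻ x, (‖h x‖₊ : ℝ≥0∞) ^ (2:ℝ) ∂volume) ^ (1/2:ℝ) := by
    intro h
    rw [eLpNorm_eq_lintegral_rpow_enorm_toReal (by norm_num) (by norm_num)]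
    simp only [enorm_eq_nnnorm]
    norm_num
  -- Step A : pointwise bound on the convolution
  have stepA : ∀ ξ : EuclideanSpace ℝ (Fin 2),
      (‖∫ η : EuclideanSpace ℝ (Fin 2), f η * g (ξ - η)‖₊ : ℝ≥0∞) ≤ Nf * Ng := by
    intro ξ
    have hmp : MeasurePreserving (fun η : EuclideanSpace ℝ (Fin 2) => ξ - η) volume volume :=
      Measure.measurePreserving_sub_left volume ξ
    calc (‖∫ η : EuclideanSpace ℝ (Fin 2), f η * g (ξ - η)‖₊ : ℝ≥0∞)
        ≤ ∫⁻ η, (‖f η * g (ξ - η)‖₊ : ℝ≥0∞) ∂volume :=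
          enorm_integral_le_lintegral_enorm _
      _ = ∫⁻ η, ((fun η => (‖f η‖₊ : ℝ≥0∞)) * fun η => (‖g (ξ - η)‖₊ : ℝ≥0∞)) η ∂volume := by
          simp [nnnorm_mul, ENNReal.coe_mul]
      _ ≤ (∫⁻ η, (‖f η‖₊ : ℝ≥0∞) ^ (2:ℝ) ∂volume) ^ (1/2:ℝ) *
          (∫⁻ η, (‖g (ξ - η)‖₊ : ℝ≥0∞) ^ (2:ℝ) ∂volume) ^ (1/2:ℝ) := by
          refine ENNReal.lintegral_mul_le_Lp_mul_Lq volume hconj hf.1.enorm ?_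
          exact hg.1.enorm.comp_quasiMeasurePreserving hmp.quasiMeasurePreserving
      _ = Nf * Ng := by
          rw [hmp.lintegral_comp_emb (MeasurableEquiv.subLeft ξ).measurableEmbedding
            (fun y => (‖g y‖₊ : ℝ≥0∞) ^ (2:ℝ))]
          show _ = eLpNorm f 2 volume * eLpNorm g 2 volume
          rw [heLp f, heLp g]
  -- Step B : main estimate
  calc eLpNorm (fun ξ : EuclideanSpace ℝ (Fin 2) =>
          (((‖ξ‖ ^ (-a) * (1 + ‖ξ‖ ^ 2) ^ (-(b/2)) : ℝ)) : ℂ) *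
            ∫ η : EuclideanSpace ℝ (Fin 2), f η * g (ξ - η)) 2 volume
      = (∫⁻ ξ, (‖(((‖ξ‖ ^ (-a) * (1 + ‖ξ‖ ^ 2) ^ (-(b/2)) : ℝ)) : ℂ) *
            ∫ η : EuclideanSpace ℝ (Fin 2), f η * g (ξ - η)‖₊ : ℝ≥0∞) ^ (2:ℝ) ∂volume) ^ (1/2:ℝ) :=
        heLp _
    _ ≤ (∫⁻ ξ, ((‖(‖ξ‖ ^ (-a) * (1 + ‖ξ‖ ^ 2) ^ (-(b/2)) : ℝ)‖₊ : ℝ≥0∞) ^ (2:ℝ)) *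
          (Nf * Ng) ^ (2:ℝ) ∂volume) ^ (1/2:ℝ) := by
        refine ENNReal.rpow_le_rpow (lintegral_mono fun ξ => ?_) (by norm_num)
        rw [nnnorm_mul, ENNReal.coe_mul, Complex.nnnorm_real,
          ENNReal.mul_rpow_of_nonneg _ _ (by norm_num)]
        exact mul_le_mul_right (ENNReal.rpow_le_rpow (stepA ξ) (by norm_num)) _
    _ = (M * (Nf * Ng) ^ (2:ℝ)) ^ (1/2:ℝ) := by
        rw [lintegral_mul_const' _ _ (by
          exact (ENNReal.rpow_lt_top_of_nonneg (by norm_num)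
            (ENNReal.mul_ne_top hNf hNg)).ne), ← hM]
    _ = M ^ (1/2:ℝ) * (Nf * Ng) := by
        rw [ENNReal.mul_rpow_of_nonneg _ _ (by norm_num), ← ENNReal.rpow_mul]
        norm_num
    _ ≤ ENNReal.ofReal ((M ^ (1/2:ℝ)).toReal + 1) * (Nf * Ng) := by
        refine mul_le_mul_left ?_ _
        conv_lhs => rw [← ENNReal.ofReal_toReal hM2]
        exact ENNReal.ofReal_le_ofReal (by linarith)

end
end

section
/- Let N, d, γ > 0 and let Ω(γ) be a maximal γ-separated subset of the unit circle 𝕊¹ ⊂ ℝ². Then for all (τ, ξ) ∈ ℝ × ℝ² with |ξ| ∼ N, the number of ω ∈ Ω(γ) such that |τ + ξ·ω| ≲ d is bounded by a constant times 1 + (d/(Nγ²))^{1/2}. -/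
/- STATEMENT 3 (Lemma `HyperLemma`): counting the directions ω in a maximal γ-separated
   subset of the unit circle for which (τ,ξ) lies in the thickened null hyperplane
   H_d(ω) = {|τ + ξ·ω| ≲ d}.  The comparability constants in "|ξ| ∼ N" and "≲ d" are
   fixed in advance (c₁, c₂); the resulting constant C is uniform. -/

open InnerProductGeometry
open scoped RealInnerProductSpace

noncomputable section

open Real

section AuxiliaryLemmas

lemma sep_count {T : Set ℝ} {γ L : ℝ} (hγ : 0 < γ) (hL : 0 ≤ L)
    (hdiam : ∀ x ∈ T, ∀ y ∈ T, |x - y| ≤ L)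
    (hsep : ∀ x ∈ T, ∀ y ∈ T, x ≠ y → γ ≤ |x - y|) :
    T.Finite ∧ (T.ncard : ℝ) ≤ 2 * L / γ + 1 := by
  rcases T.eq_empty_or_nonempty with h | ⟨x₀, hx₀⟩
  · subst h; simp; positivity
  set f : ℝ → ℤ := fun x => ⌊(x - (x₀ - L)) / γ⌋ with hf
  have hmaps : ∀ x ∈ T, f x ∈ Set.Icc (0:ℤ) ⌊2 * L / γ⌋ := by
    intro x hx
    have h1 : |x - x₀| ≤ L := hdiam x hx x₀ hx₀
    rw [abs_le] at h1
    constructor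
    · exact Int.floor_nonneg.2 (by apply div_nonneg (by linarith) hγ.le)
    · apply Int.floor_le_floor; gcongr; linarith
  have hinj : Set.InjOn f T := by
    intro x hx y hy hxy
    by_contra hne
    have h1 := hsep x hx y hy hne
    have hxy' : ⌊(x - (x₀ - L)) / γ⌋ = ⌊(y - (x₀ - L)) / γ⌋ := hxy
    have h2 : |(x - (x₀ - L)) / γ - (y - (x₀ - L)) / γ| < 1 := by
      have h6 := Int.sub_one_lt_floor ((x - (x₀ - L)) / γ)
      have h3 := Int.floor_le ((x - (x₀ - L)) / γ)
      have h4 := Int.floor_le ((y - (x₀ - L)) / γ)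
      have h5 := Int.sub_one_lt_floor ((y - (x₀ - L)) / γ)
      rw [hxy'] at h3 h6
      rw [abs_lt]; constructor <;> linarith
    rw [div_sub_div_same, abs_div, abs_of_pos hγ, div_lt_one hγ] at h2
    have he : x - (x₀ - L) - (y - (x₀ - L)) = x - y := by ring
    rw [he] at h2
    linarith
  have hfin' : (Set.Icc (0:ℤ) ⌊2 * L / γ⌋).Finite := Set.finite_Icc _ _
  have hfin : T.Finite := Set.Finite.of_finite_image (hfin'.subset (Set.image_subset_iff.2 hmaps)) hinj
  refine ⟨hfin, ?_⟩
  have hcard := Set.ncard_le_ncard_of_injOn f hmaps hinj hfin'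
  have hicc : (Set.Icc (0:ℤ) ⌊2 * L / γ⌋).ncard = (⌊2 * L / γ⌋ + 1).toNat := by
    rw [← Finset.coe_Icc, Set.ncard_coe_finset, Int.card_Icc]; ring_nf
  rw [hicc] at hcard
  have hnn : (0:ℤ) ≤ ⌊2 * L / γ⌋ := Int.floor_nonneg.2 (by positivity)
  have h2' : ((⌊2 * L / γ⌋ + 1).toNat : ℤ) = ⌊2 * L / γ⌋ + 1 := Int.toNat_of_nonneg (by linarith)
  have h2 : ((⌊2 * L / γ⌋ + 1).toNat : ℝ) = (⌊2 * L / γ⌋ : ℝ) + 1 := by exact_mod_cast congrArg (fun z : ℤ => (z:ℝ)) h2'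
  have h3 := Int.floor_le (2 * L / γ)
  calc (T.ncard : ℝ) ≤ ((⌊2 * L / γ⌋ + 1).toNat : ℝ) := by exact_mod_cast hcard
    _ ≤ 2 * L / γ + 1 := by rw [h2]; linarith

lemma theta_diam {θ₁ θ₂ ε : ℝ} (h1 : θ₁ ∈ Set.Icc 0 π) (h2 : θ₂ ∈ Set.Icc 0 π)
    (hc : |Real.cos θ₁ - Real.cos θ₂| ≤ 2 * ε) : |θ₁ - θ₂| ≤ π * Real.sqrt ε := by
  obtain ⟨h10, h11⟩ := h1
  obtain ⟨h20, h21⟩ := h2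
  have hε : 0 ≤ ε := by
    nlinarith [abs_nonneg (Real.cos θ₁ - Real.cos θ₂)]
  wlog hle : θ₁ ≤ θ₂ generalizing θ₁ θ₂
  · rw [abs_sub_comm] at hc ⊢
    exact this hc h20 h21 h10 h11 (by linarith)
  set m := (θ₁ + θ₂) / 2 with hm
  set h := (θ₂ - θ₁) / 2 with hh
  have hh0 : 0 ≤ h := by simp [hh]; linarith
  have hhp : h ≤ π / 2 := by simp [hh]; linarith
  have hcc : Real.cos θ₁ - Real.cos θ₂ = 2 * Real.sin m * Real.sin h := by
    rw [Real.cos_sub_cos]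
    have e1 : (θ₁ + θ₂) / 2 = m := rfl
    have e2 : (θ₁ - θ₂) / 2 = -h := by rw [hh]; ring
    rw [e1, e2, Real.sin_neg]; ring
  -- sin m ≥ sin h
  have hsm : Real.sin h ≤ Real.sin m := by
    rcases le_or_gt m (π/2) with hcase | hcase
    · apply Real.sin_le_sin_of_le_of_le_pi_div_two (by linarith [Real.pi_pos]) hcase
      simp [hm, hh]; linarith
    · rw [← Real.sin_pi_sub m]
      apply Real.sin_le_sin_of_le_of_le_pi_div_two (by linarith [Real.pi_pos]) (by linarith)
      simp [hm, hh]; linarith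
  have hjordan : 2 / π * h ≤ Real.sin h := Real.mul_le_sin hh0 hhp
  have hsh0 : 0 ≤ Real.sin h := Real.sin_nonneg_of_nonneg_of_le_pi hh0 (by linarith)
  have hpi := Real.pi_pos
  -- 2 sin m sin h ≤ 2 ε, so (2/π h)^2 ≤ ε
  have key : 2 * (2 / π * h) ^ 2 ≤ 2 * ε := by
    have : 2 * Real.sin m * Real.sin h ≤ 2 * ε := by
      rw [← hcc]; exact (le_abs_self _).trans hc
    nlinarith [mul_le_mul hjordan (hjordan.trans hsm) (by positivity : (0:ℝ) ≤ 2/π*h) hsh0]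
  have hsq : h ^ 2 ≤ π ^ 2 * ε / 4 := by
    have h4 : (2 / π) ^ 2 * h ^ 2 ≤ ε := by nlinarith
    rw [div_pow] at h4
    have : (2:ℝ)^2 / π^2 * h^2 = 4 * h^2 / π^2 := by ring
    rw [this] at h4
    rw [div_le_iff₀ (by positivity)] at h4
    nlinarith
  have : h ≤ π * Real.sqrt ε / 2 := by
    have := Real.sqrt_le_sqrt hsq
    rw [Real.sqrt_sq hh0] at this
    have e : Real.sqrt (π ^ 2 * ε / 4) = π * Real.sqrt ε / 2 := by
      rw [show π ^ 2 * ε / 4 = (π/2)^2 * ε by ring, Real.sqrt_mul (by positivity),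
        Real.sqrt_sq (by positivity)]
      ring
    linarith [e ▸ this]
  rw [abs_sub_comm, abs_of_nonneg (by linarith : (0:ℝ) ≤ θ₂ - θ₁)]
  linarith

lemma half_count (e f : EuclideanSpace ℝ (Fin 2))
    (he : ‖e‖ = 1)
    (hpar : ∀ u v : EuclideanSpace ℝ (Fin 2),
      ⟪u, v⟫ = ⟪e, u⟫ * ⟪e, v⟫ + ⟪f, u⟫ * ⟪f, v⟫)
    {γ ε t : ℝ} (hγ : 0 < γ) (hε : 0 ≤ ε)
    {T : Set (EuclideanSpace ℝ (Fin 2))}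
    (hT1 : ∀ ω ∈ T, ‖ω‖ = 1)
    (hTsep : ∀ ω₁ ∈ T, ∀ ω₂ ∈ T, ω₁ ≠ ω₂ → γ ≤ angle ω₁ ω₂)
    (hTf : ∀ ω ∈ T, 0 ≤ ⟪f, ω⟫)
    (hTe : ∀ ω ∈ T, |⟪e, ω⟫ - t| ≤ ε) :
    T.Finite ∧ (T.ncard : ℝ) ≤ 2 * (π * Real.sqrt ε) / γ + 1 := by
  set θ : EuclideanSpace ℝ (Fin 2) → ℝ := fun ω => Real.arccos ⟪e, ω⟫ with hθ
  have hbound : ∀ ω ∈ T, |⟪e, ω⟫| ≤ 1 := by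
    intro ω hω
    have := abs_real_inner_le_norm e ω
    rwa [he, hT1 ω hω, one_mul] at this
  have hcos : ∀ ω ∈ T, Real.cos (θ ω) = ⟪e, ω⟫ := by
    intro ω hω
    exact Real.cos_arccos (abs_le.1 (hbound ω hω)).1 (abs_le.1 (hbound ω hω)).2
  have hsin : ∀ ω ∈ T, Real.sin (θ ω) = ⟪f, ω⟫ := by
    intro ω hω
    have hpyth : ⟪e, ω⟫ ^ 2 + ⟪f, ω⟫ ^ 2 = 1 := by
      have := hpar ω ω
      rw [real_inner_self_eq_norm_sq, hT1 ω hω] at this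
      nlinarith [this]
    rw [hθ]
    simp only [Real.sin_arccos]
    rw [show 1 - ⟪e, ω⟫ ^ 2 = ⟪f, ω⟫ ^ 2 by linarith]
    exact Real.sqrt_sq (hTf ω hω)
  have hrange : ∀ ω ∈ T, θ ω ∈ Set.Icc 0 π :=
    fun ω _ => ⟨Real.arccos_nonneg _, Real.arccos_le_pi _⟩
  have hangle : ∀ ω₁ ∈ T, ∀ ω₂ ∈ T, angle ω₁ ω₂ = |θ ω₁ - θ ω₂| := by
    intro u hu v hv
    have hip : ⟪u, v⟫ = Real.cos (θ u - θ v) := by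
      rw [Real.cos_sub, hcos u hu, hcos v hv, hsin u hu, hsin v hv, hpar u v]
    rw [angle, hT1 u hu, hT1 v hv, one_mul, div_one, hip, ← Real.cos_abs]
    apply Real.arccos_cos (abs_nonneg _)
    have h1 := hrange u hu; have h2 := hrange v hv
    rw [abs_le]
    constructor <;> [linarith [h1.1, h2.2]; linarith [h1.2, h2.1]]
  have hinj : Set.InjOn θ T := by
    intro u hu v hv huv
    by_contra hne
    have := hTsep u hu v hv hne
    rw [hangle u hu v hv, huv, sub_self, abs_zero] at this
    linarith
  -- apply sep_count to the image
  have hres := sep_count (T := θ '' T) hγ (by positivity : (0:ℝ) ≤ π * Real.sqrt ε) ?_ ?_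
  · refine ⟨Set.Finite.of_finite_image hres.1 hinj, ?_⟩
    rw [← Set.ncard_image_of_injOn hinj]; exact hres.2
  · rintro _ ⟨u, hu, rfl⟩ _ ⟨v, hv, rfl⟩
    apply theta_diam (hrange u hu) (hrange v hv)
    have h1 := hTe u hu; have h2 := hTe v hv
    rw [hcos u hu, hcos v hv]
    calc |⟪e, u⟫ - ⟪e, v⟫| = |(⟪e, u⟫ - t) - (⟪e, v⟫ - t)| := by ring_nf
      _ ≤ |⟪e, u⟫ - t| + |⟪e, v⟫ - t| := abs_sub _ _
      _ ≤ 2 * ε := by linarith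
  · rintro _ ⟨u, hu, rfl⟩ _ ⟨v, hv, rfl⟩ hne
    have hne' : u ≠ v := fun h => hne (by rw [h])
    have := hTsep u hu v hv hne'
    rwa [hangle u hu v hv] at this

end AuxiliaryLemmas

def IsMaximalSeparated (γ : ℝ) (Ω : Set (EuclideanSpace ℝ (Fin 2))) : Prop :=
  (∀ ω ∈ Ω, ‖ω‖ = 1) ∧
  (∀ ω₁ ∈ Ω, ∀ ω₂ ∈ Ω, ω₁ ≠ ω₂ → γ ≤ angle ω₁ ω₂) ∧
  (∀ v : EuclideanSpace ℝ (Fin 2), ‖v‖ = 1 → ∃ ω ∈ Ω, angle v ω < γ)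

set_option maxHeartbeats 1000000 in
theorem hyperplane_counting (c₁ c₂ : ℝ) (hc₁ : 1 ≤ c₁) (hc₂ : 0 < c₂) :
    ∃ C : ℝ, 0 < C ∧
      ∀ (N d γ : ℝ), 0 < N → 0 < d → 0 < γ →
        ∀ Ω : Set (EuclideanSpace ℝ (Fin 2)), IsMaximalSeparated γ Ω →
          ∀ (τ : ℝ) (ξ : EuclideanSpace ℝ (Fin 2)),
            N / c₁ ≤ ‖ξ‖ → ‖ξ‖ ≤ c₁ * N →
            ({ω ∈ Ω | |τ + ⟪ξ, ω⟫| ≤ c₂ * d}).Finite ∧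
            (({ω ∈ Ω | |τ + ⟪ξ, ω⟫| ≤ c₂ * d}).ncard : ℝ)
              ≤ C * (1 + (d / (N * γ ^ 2)) ^ ((1:ℝ)/2)) := by
  refine ⟨2 + 4 * π * Real.sqrt (c₁ * c₂), by positivity, ?_⟩
  intro N d γ hN hd hγ Ω hΩ τ ξ hlo hhi
  obtain ⟨hΩ1, hΩsep, -⟩ := hΩ
  have hξpos : 0 < ‖ξ‖ := lt_of_lt_of_le (by positivity) hlo
  set e : EuclideanSpace ℝ (Fin 2) := ‖ξ‖⁻¹ • ξ with hedef
  have he : ‖e‖ = 1 := norm_smul_inv_norm (by simpa using hξpos.ne')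
  set f : EuclideanSpace ℝ (Fin 2) :=
    (EuclideanSpace.equiv (Fin 2) ℝ).symm ![-(e 1), e 0] with hfdef
  have hf0 : f 0 = -(e 1) := by simp [hfdef, EuclideanSpace.equiv]
  have hf1 : f 1 = e 0 := by simp [hfdef, EuclideanSpace.equiv]
  have hco : ∀ x y : EuclideanSpace ℝ (Fin 2), ⟪x, y⟫ = x 0 * y 0 + x 1 * y 1 := by
    intro x y; simp [PiLp.inner_apply, Fin.sum_univ_two, RCLike.inner_apply]; ring
  have hesq : e 0 ^ 2 + e 1 ^ 2 = 1 := by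
    have h := real_inner_self_eq_norm_sq e
    rw [he, hco] at h
    nlinarith [h]
  have hpar : ∀ u v : EuclideanSpace ℝ (Fin 2),
      ⟪u, v⟫ = ⟪e, u⟫ * ⟪e, v⟫ + ⟪f, u⟫ * ⟪f, v⟫ := by
    intro u v
    rw [hco u v, hco e u, hco e v, hco f u, hco f v, hf0, hf1]
    linear_combination -(u 0 * v 0 + u 1 * v 1) * hesq
  have hpar' : ∀ u v : EuclideanSpace ℝ (Fin 2),
      ⟪u, v⟫ = ⟪e, u⟫ * ⟪e, v⟫ + ⟪-f, u⟫ * ⟪-f, v⟫ := by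
    intro u v
    rw [inner_neg_left, inner_neg_left, hpar u v]; ring
  set ε := c₂ * d / ‖ξ‖ with hεdef
  have hε : 0 ≤ ε := by positivity
  set t := -(τ / ‖ξ‖) with htdef
  set S := {ω ∈ Ω | |τ + ⟪ξ, ω⟫| ≤ c₂ * d} with hSdef
  have hSe : ∀ ω ∈ S, |⟪e, ω⟫ - t| ≤ ε := by
    rintro ω ⟨-, hω2⟩
    have hie : ⟪e, ω⟫ = ⟪ξ, ω⟫ / ‖ξ‖ := by
      rw [hedef, real_inner_smul_left]; ring
    rw [hie, htdef, hεdef]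
    rw [show ⟪ξ, ω⟫ / ‖ξ‖ - -(τ / ‖ξ‖) = (τ + ⟪ξ, ω⟫) / ‖ξ‖ by ring,
      abs_div, abs_of_pos hξpos]
    gcongr
  have hS1 : ∀ ω ∈ S, ‖ω‖ = 1 := fun ω hω => hΩ1 ω hω.1
  have hSsep : ∀ ω₁ ∈ S, ∀ ω₂ ∈ S, ω₁ ≠ ω₂ → γ ≤ angle ω₁ ω₂ :=
    fun a ha b hb => hΩsep a ha.1 b hb.1
  set Sp := {ω ∈ S | 0 ≤ ⟪f, ω⟫} with hSp
  set Sm := {ω ∈ S | ⟪f, ω⟫ ≤ 0} with hSm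
  have hsubp : Sp ⊆ S := fun ω h => h.1
  have hsubm : Sm ⊆ S := fun ω h => h.1
  have hp := half_count e f he hpar hγ hε (fun ω h => hS1 ω (hsubp h))
    (fun a ha b hb => hSsep a (hsubp ha) b (hsubp hb)) (fun ω h => h.2)
    (fun ω h => hSe ω (hsubp h))
  have hm := half_count e (-f) he hpar' hγ hε (fun ω h => hS1 ω (hsubm h))
    (fun a ha b hb => hSsep a (hsubm ha) b (hsubm hb))
    (fun ω h => by rw [inner_neg_left]; linarith [h.2])
    (fun ω h => hSe ω (hsubm h))
  have hcover : S = Sp ∪ Sm := by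
    ext ω
    simp only [hSp, hSm, Set.mem_union, Set.mem_setOf_eq]
    constructor
    · intro h
      rcases le_total 0 (⟪f, ω⟫) with h2 | h2
      exacts [Or.inl ⟨h, h2⟩, Or.inr ⟨h, h2⟩]
    · rintro (h | h) <;> exact h.1
  have hSfin : S.Finite := by rw [hcover]; exact hp.1.union hm.1
  have hεle : ε / γ ^ 2 ≤ (c₁ * c₂) * (d / (N * γ ^ 2)) := by
    have hc₁0 : (0:ℝ) < c₁ := by linarith
    have hN' : N ≤ c₁ * ‖ξ‖ := by
      rw [div_le_iff₀ hc₁0] at hlo; linarith [hlo]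
    have h1 : ε ≤ c₁ * c₂ * d / N := by
      rw [hεdef, div_le_div_iff₀ hξpos hN]
      have hprod := mul_le_mul_of_nonneg_left hN' (by positivity : (0:ℝ) ≤ c₂ * d)
      nlinarith [hprod]
    calc ε / γ ^ 2 ≤ (c₁ * c₂ * d / N) / γ ^ 2 := by gcongr
      _ = (c₁ * c₂) * (d / (N * γ ^ 2)) := by field_simp
  clear_value e f t ε S Sp Sm
  refine ⟨hSfin, ?_⟩
  have hcard : (S.ncard : ℝ) ≤ 4 * (π * Real.sqrt ε) / γ + 2 := by
    have hu := Set.ncard_union_le Sp Sm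
    have : (S.ncard : ℝ) ≤ (Sp.ncard : ℝ) + (Sm.ncard : ℝ) := by
      rw [hcover]; exact_mod_cast hu
    have h4 : 4 * (π * Real.sqrt ε) / γ
        = 2 * (π * Real.sqrt ε) / γ + 2 * (π * Real.sqrt ε) / γ := by ring
    rw [h4]
    linarith [hp.2, hm.2, this]
  set A := (d / (N * γ ^ 2)) ^ ((1:ℝ)/2) with hA
  have hAeq : A = Real.sqrt (d / (N * γ ^ 2)) := (Real.sqrt_eq_rpow _).symm
  have hA0 : 0 ≤ A := by rw [hAeq]; positivity
  have hkey : Real.sqrt ε / γ ≤ Real.sqrt (c₁ * c₂) * A := by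
    have e1 : Real.sqrt ε / γ = Real.sqrt (ε / γ ^ 2) := by
      rw [Real.sqrt_div hε, Real.sqrt_sq hγ.le]
    rw [e1, hAeq, ← Real.sqrt_mul (by positivity : (0:ℝ) ≤ c₁ * c₂)]
    exact Real.sqrt_le_sqrt hεle
  have hge : 0 ≤ Real.sqrt (c₁ * c₂) := Real.sqrt_nonneg _
  have hπ := Real.pi_pos
  calc (S.ncard : ℝ) ≤ 4 * (π * Real.sqrt ε) / γ + 2 := hcard
    _ = 4 * π * (Real.sqrt ε / γ) + 2 := by ring
    _ ≤ 4 * π * (Real.sqrt (c₁ * c₂) * A) + 2 := by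
        have := mul_le_mul_of_nonneg_left hkey (by positivity : (0:ℝ) ≤ 4 * π)
        linarith [this]
    _ ≤ (2 + 4 * π * Real.sqrt (c₁ * c₂)) * (1 + A) := by
        have h5 : (0:ℝ) ≤ 4 * π * Real.sqrt (c₁ * c₂) := by positivity
        nlinarith [hA0, h5]

end
end

section
/- For every pair of nonzero vectors ξ₁, ξ₂ ∈ ℝ² with θ(ξ₁,ξ₂) > 0, we have 1 ≲ ∑_{γ} ∑_{(ω₁,ω₂)} χ_{Γ_γ(ω₁)}(ξ₁) χ_{Γ_γ(ω₂)}(ξ₂) ≲ 1, where the outer sum is over dyadic γ with 0 < γ < 1 and the inner sum is over pairs ω₁, ω₂ ∈ Ω(γ) with 3γ ≤ θ(ω₁,ω₂) ≤ 12γ. -/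
/- STATEMENT 5 (Lemma `WhitneyLemma1`, angular Whitney decomposition):
   1 ∼ ∑_{γ = 2^j < 1 dyadic} ∑_{ω₁,ω₂ ∈ Ω(γ), 3γ ≤ θ(ω₁,ω₂) ≤ 12γ}
        χ_{Γ_γ(ω₁)}(ξ₁) χ_{Γ_γ(ω₂)}(ξ₂)
   for all nonzero ξ₁, ξ₂ with θ(ξ₁,ξ₂) > 0.  Since each summand is 0 or 1, this is
   formalized as: the set of triples (j, ω₁, ω₂) contributing to the sum is nonempty,
   finite, and of cardinality at most an absolute constant C. -/

open InnerProductGeometry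

noncomputable section

private abbrev V2 := EuclideanSpace ℝ (Fin 2)

instance : Fact (Module.finrank ℝ V2 = 2) := ⟨finrank_euclideanSpace_fin⟩

private noncomputable def ori : Orientation ℝ V2 (Fin 2) :=
  (EuclideanSpace.basisFun (Fin 2) ℝ).toBasis.orientation

private lemma abs_toReal_coe_le (s : ℝ) : |((s : Real.Angle)).toReal| ≤ |s| := by
  rcases le_or_gt s (-Real.pi) with h | h
  · exact (Real.Angle.abs_toReal_le_pi _).trans
      (by rw [abs_of_nonpos (h.trans (by simp [Real.pi_pos.le]))]; linarith)
  rcases le_or_gt s Real.pi with h2 | h2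
  · rw [Real.Angle.toReal_coe_eq_self_iff.2 ⟨h, h2⟩]
  · exact (Real.Angle.abs_toReal_le_pi _).trans
      (by rw [abs_of_pos (lt_trans Real.pi_pos h2)]; linarith)

private lemma abs_toReal_add_le (α β : Real.Angle) :
    |(α + β).toReal| ≤ |α.toReal| + |β.toReal| := by
  calc |(α + β).toReal| = |(((α.toReal + β.toReal : ℝ) : Real.Angle)).toReal| := by
        rw [Real.Angle.coe_add, Real.Angle.coe_toReal, Real.Angle.coe_toReal]
    _ ≤ |α.toReal + β.toReal| := abs_toReal_coe_le _
    _ ≤ _ := abs_add_le _ _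

/-- Triangle inequality for unoriented angles in ℝ². -/
private lemma angle_triangle2 {x y z : V2} (hx : x ≠ 0) (hy : y ≠ 0) (hz : z ≠ 0) :
    angle x z ≤ angle x y + angle y z := by
  rw [ori.angle_eq_abs_oangle_toReal hx hz, ori.angle_eq_abs_oangle_toReal hx hy,
    ori.angle_eq_abs_oangle_toReal hy hz, ← ori.oangle_add hx hy hz]
  exact abs_toReal_add_le _ _

private lemma angle_eq_abs_sub {ξ x y : V2} (hξ : ξ ≠ 0) (hx : x ≠ 0) (hy : y ≠ 0)
    (h : |(ori.oangle ξ y).toReal - (ori.oangle ξ x).toReal| < Real.pi) :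
    angle x y = |(ori.oangle ξ y).toReal - (ori.oangle ξ x).toReal| := by
  rw [ori.angle_eq_abs_oangle_toReal hx hy]
  have h1 : ori.oangle x y
      = (((ori.oangle ξ y).toReal - (ori.oangle ξ x).toReal : ℝ) : Real.Angle) := by
    rw [← ori.oangle_add hx hξ hy, ori.oangle_rev, Real.Angle.coe_sub,
      Real.Angle.coe_toReal, Real.Angle.coe_toReal, sub_eq_neg_add]
  rw [h1, Real.Angle.toReal_coe_eq_self_iff.2
    ⟨by cases abs_lt.1 h with | intro a b => linarith,
     le_of_lt (lt_of_le_of_lt (le_abs_self _) h)⟩]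

/-- Packing: two points of a `γ`-separated family in the `γ`-sector around `ξ`
falling in the same bin coincide. -/
private lemma packing {γ : ℝ} (hγ0 : 0 < γ) (hγ : γ ≤ 1 / 2) {ξ x y : V2}
    (hξ : ξ ≠ 0) (hx : x ≠ 0) (hy : y ≠ 0)
    (hax : angle ξ x ≤ γ) (hay : angle ξ y ≤ γ)
    (hsep : x ≠ y → γ ≤ angle x y)
    (hfl : ⌊((ori.oangle ξ x).toReal + γ) / γ⌋ = ⌊((ori.oangle ξ y).toReal + γ) / γ⌋) :
    x = y := by
  by_contra hne
  set tx := (ori.oangle ξ x).toReal with htxdef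
  set ty := (ori.oangle ξ y).toReal with htydef
  have h1 : (tx + γ) / γ < ⌊(tx + γ) / γ⌋ + 1 := Int.lt_floor_add_one _
  have h2 : ((⌊(tx + γ) / γ⌋ : ℤ) : ℝ) ≤ (tx + γ) / γ := Int.floor_le _
  have h3 : (ty + γ) / γ < ⌊(ty + γ) / γ⌋ + 1 := Int.lt_floor_add_one _
  have h4 : ((⌊(ty + γ) / γ⌋ : ℤ) : ℝ) ≤ (ty + γ) / γ := Int.floor_le _
  rw [hfl] at h1 h2
  have hd1 : (tx + γ) / γ - (ty + γ) / γ < 1 := by linarith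
  have hd2 : (ty + γ) / γ - (tx + γ) / γ < 1 := by linarith
  rw [div_sub_div_same] at hd1 hd2
  have hq1 : tx - ty < γ := by
    have := (div_lt_one hγ0).1 (by simpa using hd1); linarith
  have hq2 : ty - tx < γ := by
    have := (div_lt_one hγ0).1 (by simpa using hd2); linarith
  have habs : |ty - tx| < γ := abs_lt.2 ⟨by linarith, by linarith⟩
  have hπ : |ty - tx| < Real.pi := lt_of_lt_of_le habs (hγ.trans (by linarith [Real.pi_gt_three]))
  have := angle_eq_abs_sub hξ hx hy hπ
  have hs := hsep hne
  rw [this] at hs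
  linarith


theorem whitney_decomposition :
    ∃ C : ℕ, 0 < C ∧
      ∀ Ω : ℤ → Set (EuclideanSpace ℝ (Fin 2)),
        (∀ j : ℤ, j < 0 → IsMaximalSeparated ((2:ℝ) ^ j) (Ω j)) →
        ∀ ξ₁ ξ₂ : EuclideanSpace ℝ (Fin 2), ξ₁ ≠ 0 → ξ₂ ≠ 0 →
          0 < angle ξ₁ ξ₂ →
          let S : Set (ℤ × EuclideanSpace ℝ (Fin 2) × EuclideanSpace ℝ (Fin 2)) :=
            {p | p.1 < 0 ∧ p.2.1 ∈ Ω p.1 ∧ p.2.2 ∈ Ω p.1 ∧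
              3 * (2:ℝ) ^ p.1 ≤ angle p.2.1 p.2.2 ∧ angle p.2.1 p.2.2 ≤ 12 * (2:ℝ) ^ p.1 ∧
              angle ξ₁ p.2.1 ≤ (2:ℝ) ^ p.1 ∧ angle ξ₂ p.2.2 ≤ (2:ℝ) ^ p.1}
          S.Nonempty ∧ S.Finite ∧ S.ncard ≤ C := by
  refine ⟨45, by norm_num, ?_⟩
  intro Ω hΩ ξ₁ ξ₂ h₁ h₂ hθpos S
  set θ := angle ξ₁ ξ₂ with hθdef
  have hθπ : θ ≤ Real.pi := angle_le_pi _ _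
  -- the set S, with membership unfolded
  have hSmem : ∀ p : ℤ × V2 × V2, p ∈ S ↔
      (p.1 < 0 ∧ p.2.1 ∈ Ω p.1 ∧ p.2.2 ∈ Ω p.1 ∧
        3 * (2:ℝ) ^ p.1 ≤ angle p.2.1 p.2.2 ∧ angle p.2.1 p.2.2 ≤ 12 * (2:ℝ) ^ p.1 ∧
        angle ξ₁ p.2.1 ≤ (2:ℝ) ^ p.1 ∧ angle ξ₂ p.2.2 ≤ (2:ℝ) ^ p.1) := fun p => Iff.rfl
  -- bounds on j for members of S
  have hjbound : ∀ p ∈ S, (2:ℝ) ^ p.1 ≤ θ ∧ θ ≤ 14 * (2:ℝ) ^ p.1 := by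
    rintro ⟨j, ω₁, ω₂⟩ hp
    obtain ⟨hj, hΩ1, hΩ2, hlow, hhigh, ha1, ha2⟩ := (hSmem _).1 hp
    obtain ⟨hunit, hsep, hmax⟩ := hΩ j hj
    have hω₁0 : ω₁ ≠ 0 := fun h => by simpa [h] using hunit _ hΩ1
    have hω₂0 : ω₂ ≠ 0 := fun h => by simpa [h] using hunit _ hΩ2
    have t1 : angle ω₁ ω₂ ≤ angle ω₁ ξ₁ + angle ξ₁ ω₂ := angle_triangle2 hω₁0 h₁ hω₂0
    have t1b : angle ξ₁ ω₂ ≤ angle ξ₁ ξ₂ + angle ξ₂ ω₂ := angle_triangle2 h₁ h₂ hω₂0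
    have t2 : angle ξ₁ ξ₂ ≤ angle ξ₁ ω₁ + angle ω₁ ξ₂ := angle_triangle2 h₁ hω₁0 h₂
    have t2b : angle ω₁ ξ₂ ≤ angle ω₁ ω₂ + angle ω₂ ξ₂ := angle_triangle2 hω₁0 hω₂0 h₂
    rw [angle_comm ω₁ ξ₁] at t1
    rw [angle_comm ω₂ ξ₂] at t2b
    constructor
    · linarith
    · linarith
  refine ⟨?_, ?_⟩
  -- Nonemptiness
  · obtain ⟨n, hn⟩ := exists_mem_Ico_zpow (x := θ / 5) (y := (2:ℝ)) (by positivity) one_lt_two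
    rw [Set.mem_Ico] at hn
    obtain ⟨hn1, hn2⟩ := hn
    set γ := (2:ℝ) ^ n with hγdef
    have hγpos : 0 < γ := zpow_pos (by norm_num) n
    have h2n : (2:ℝ) ^ (n + 1) = 2 * γ := by rw [zpow_add_one₀ (by norm_num : (2:ℝ) ≠ 0)]; ring
    have hγθ : θ < 10 * γ := by rw [h2n] at hn2; linarith
    have hγ5 : 5 * γ ≤ θ := by linarith
    have hn0 : n < 0 := by
      by_contra h
      push_neg at h
      have h1le : (1:ℝ) ≤ γ := by calc (1:ℝ) = 2 ^ (0:ℤ) := by norm_num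
        _ ≤ γ := zpow_le_zpow_right₀ one_le_two h
      have := Real.pi_le_four
      linarith
    obtain ⟨hunit, hsep, hmax⟩ := hΩ n hn0
    have hv₁ : ‖(‖ξ₁‖⁻¹ • ξ₁ : V2)‖ = 1 := by
      rw [norm_smul, norm_inv, norm_norm, inv_mul_cancel₀ (norm_ne_zero_iff.2 h₁)]
    have hv₂ : ‖(‖ξ₂‖⁻¹ • ξ₂ : V2)‖ = 1 := by
      rw [norm_smul, norm_inv, norm_norm, inv_mul_cancel₀ (norm_ne_zero_iff.2 h₂)]
    obtain ⟨ω₁, hω₁Ω, hω₁a⟩ := hmax _ hv₁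
    obtain ⟨ω₂, hω₂Ω, hω₂a⟩ := hmax _ hv₂
    rw [angle_smul_left_of_pos _ _ (inv_pos.2 (norm_pos_iff.2 h₁))] at hω₁a
    rw [angle_smul_left_of_pos _ _ (inv_pos.2 (norm_pos_iff.2 h₂))] at hω₂a
    have hω₁0 : ω₁ ≠ 0 := fun h => by simpa [h] using hunit _ hω₁Ω
    have hω₂0 : ω₂ ≠ 0 := fun h => by simpa [h] using hunit _ hω₂Ω
    have t1 : angle ω₁ ω₂ ≤ angle ω₁ ξ₁ + angle ξ₁ ω₂ := angle_triangle2 hω₁0 h₁ hω₂0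
    have t1b : angle ξ₁ ω₂ ≤ angle ξ₁ ξ₂ + angle ξ₂ ω₂ := angle_triangle2 h₁ h₂ hω₂0
    have t2 : angle ξ₁ ξ₂ ≤ angle ξ₁ ω₁ + angle ω₁ ξ₂ := angle_triangle2 h₁ hω₁0 h₂
    have t2b : angle ω₁ ξ₂ ≤ angle ω₁ ω₂ + angle ω₂ ξ₂ := angle_triangle2 hω₁0 hω₂0 h₂
    rw [angle_comm ω₁ ξ₁] at t1
    rw [angle_comm ω₂ ξ₂] at t2b
    exact ⟨(n, ω₁, ω₂), (hSmem _).2 ⟨hn0, hω₁Ω, hω₂Ω, by linarith, by linarith,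
      le_of_lt hω₁a, le_of_lt hω₂a⟩⟩
  -- Finiteness and cardinality
  · obtain ⟨m, hm⟩ := exists_mem_Ico_zpow (x := θ / 14) (y := (2:ℝ)) (by positivity) one_lt_two
    simp only [Set.mem_Ico] at hm
    obtain ⟨hm1, hm2⟩ := hm
    set g : ℤ × V2 × V2 → ℤ × ℤ × ℤ := fun p =>
      (p.1, ⌊((ori.oangle ξ₁ p.2.1).toReal + (2:ℝ) ^ p.1) / (2:ℝ) ^ p.1⌋,
        ⌊((ori.oangle ξ₂ p.2.2).toReal + (2:ℝ) ^ p.1) / (2:ℝ) ^ p.1⌋) with hg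
    set F : Finset (ℤ × ℤ × ℤ) :=
      Finset.Icc m (m + 4) ×ˢ Finset.Icc 0 2 ×ˢ Finset.Icc 0 2 with hF
    have key : ∀ {j : ℤ} {ξ ω : V2}, j < 0 → ξ ≠ 0 → ω ≠ 0 → angle ξ ω ≤ (2:ℝ) ^ j →
        ⌊((ori.oangle ξ ω).toReal + (2:ℝ) ^ j) / (2:ℝ) ^ j⌋ ∈ Finset.Icc (0:ℤ) 2 := by
      intro j ξ ω hj hξ hω ha
      have hγpos : (0:ℝ) < 2 ^ j := zpow_pos (by norm_num) j
      have habs : |(ori.oangle ξ ω).toReal| ≤ (2:ℝ) ^ j := by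
        rw [← ori.angle_eq_abs_oangle_toReal hξ hω]; exact ha
      obtain ⟨hl, hr⟩ := abs_le.1 habs
      have h0 : (0:ℝ) ≤ ((ori.oangle ξ ω).toReal + (2:ℝ) ^ j) / (2:ℝ) ^ j :=
        div_nonneg (by linarith) hγpos.le
      have h2 : ((ori.oangle ξ ω).toReal + (2:ℝ) ^ j) / (2:ℝ) ^ j ≤ 2 := by
        rw [div_le_iff₀ hγpos]; linarith
      refine Finset.mem_Icc.2 ⟨Int.floor_nonneg.2 h0, ?_⟩
      have := Int.floor_le_floor (R := ℝ) (h2.trans (by norm_num : (2:ℝ) ≤ 2))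
      simpa using this
    have hmaps : ∀ p ∈ S, g p ∈ (F : Set (ℤ × ℤ × ℤ)) := by
      rintro ⟨j, ω₁, ω₂⟩ hp
      obtain ⟨hjθ, hθj⟩ := hjbound _ hp
      obtain ⟨hj, hΩ1, hΩ2, hlow, hhigh, ha1, ha2⟩ := (hSmem _).1 hp
      obtain ⟨hunit, hsep, hmax⟩ := hΩ j hj
      have hω₁0 : ω₁ ≠ 0 := fun h => by simpa [h] using hunit _ hΩ1
      have hω₂0 : ω₂ ≠ 0 := fun h => by simpa [h] using hunit _ hΩ2
      have hjm : m ≤ j := by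
        have : (2:ℝ) ^ m ≤ (2:ℝ) ^ j := le_trans hm1 (by linarith)
        exact (zpow_le_zpow_iff_right₀ one_lt_two).1 this
      have hjm4 : j ≤ m + 4 := by
        have h14 : (14:ℝ) * (2:ℝ) ^ (m + 1) ≤ (2:ℝ) ^ (m + 5) := by
          rw [show m + 5 = (m + 1) + 4 by ring, zpow_add₀ (by norm_num : (2:ℝ) ≠ 0) (m+1) 4]
          have := zpow_pos (by norm_num : (0:ℝ) < 2) (m + 1)
          norm_num
          linarith
        have : (2:ℝ) ^ j < (2:ℝ) ^ (m + 5) := by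
          have h' : θ < 14 * (2:ℝ) ^ (m + 1) := by linarith
          linarith
        have := (zpow_lt_zpow_iff_right₀ one_lt_two).1 this
        omega
      simp only [hF, Finset.coe_product, Set.mem_prod, Finset.mem_coe, hg]
      exact ⟨Finset.mem_Icc.2 ⟨hjm, hjm4⟩, key hj h₁ hω₁0 ha1, key hj h₂ hω₂0 ha2⟩
    have hinj : S.InjOn g := by
      rintro ⟨j, ω₁, ω₂⟩ hp ⟨j', ω₁', ω₂'⟩ hq hgeq
      obtain ⟨hj, hΩ1, hΩ2, _, _, ha1, ha2⟩ := (hSmem _).1 hp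
      obtain ⟨hj', hΩ1', hΩ2', _, _, ha1', ha2'⟩ := (hSmem _).1 hq
      simp only [hg, Prod.mk.injEq] at hgeq
      obtain ⟨hjj, hf1, hf2⟩ := hgeq
      subst hjj
      obtain ⟨hunit, hsep, hmax⟩ := hΩ j hj
      have hγpos : (0:ℝ) < 2 ^ j := zpow_pos (by norm_num) j
      have hγhalf : (2:ℝ) ^ j ≤ 1 / 2 := by
        have : (2:ℝ) ^ j ≤ (2:ℝ) ^ (-1 : ℤ) :=
          (zpow_le_zpow_iff_right₀ one_lt_two).2 (by omega)
        simpa using this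
      have hω₁0 : ω₁ ≠ 0 := fun h => by simpa [h] using hunit _ hΩ1
      have hω₂0 : ω₂ ≠ 0 := fun h => by simpa [h] using hunit _ hΩ2
      have hω₁0' : ω₁' ≠ 0 := fun h => by simpa [h] using hunit _ hΩ1'
      have hω₂0' : ω₂' ≠ 0 := fun h => by simpa [h] using hunit _ hΩ2'
      have e1 : ω₁ = ω₁' :=
        packing hγpos hγhalf h₁ hω₁0 hω₁0' ha1 ha1' (hsep _ hΩ1 _ hΩ1') hf1
      have e2 : ω₂ = ω₂' :=
        packing hγpos hγhalf h₂ hω₂0 hω₂0' ha2 ha2' (hsep _ hΩ2 _ hΩ2') hf2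
      simp [e1, e2]
    have himg : g '' S ⊆ (F : Set (ℤ × ℤ × ℤ)) := by
      rintro _ ⟨p, hp, rfl⟩; exact hmaps p hp
    have hfin : S.Finite :=
      Set.Finite.of_finite_image ((F.finite_toSet).subset himg) hinj
    refine ⟨hfin, ?_⟩
    calc S.ncard = (g '' S).ncard := (Set.ncard_image_of_injOn hinj).symm
      _ ≤ (F : Set (ℤ × ℤ × ℤ)).ncard :=
          Set.ncard_le_ncard himg F.finite_toSet
      _ = F.card := Set.ncard_coe_finset F
      _ ≤ 45 := by
          simp [hF, Finset.card_product, Int.card_Icc]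
          omega

end
end

section
/- Let (X₀, X₁, X₂) be a bilinear interaction, i.e. X₀ = X₁ − X₂ with X_j = (τ_j, ξ_j) ∈ ℝ × ℝ² and ξ_j ≠ 0 for j = 0,1,2. Given signs ±₀, ±₁, ±₂, set h_j = τ_j ±_j |ξ_j| and θ₁₂ = θ(±₁ξ₁, ±₂ξ₂). Then max(|h₀|, |h₁|, |h₂|) ≳ min(|ξ₁|, |ξ₂|) θ₁₂². -/
/- STATEMENT 8 (first part of Lemma `AnglesLemma`): for a bilinear interaction
   X₀ = X₁ − X₂ with nonzero spatial frequencies and signs ±₀, ±₁, ±₂,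
   max(|h₀|,|h₁|,|h₂|) ≳ min(|ξ₁|,|ξ₂|) θ₁₂², where h_j = τ_j ±_j |ξ_j| and
   θ₁₂ is the angle between ±₁ξ₁ and ±₂ξ₂.  The implicit constant is absolute. -/

open InnerProductGeometry

open Real

noncomputable section

lemma jordan_cos' {θ : ℝ} (h0 : 0 ≤ θ) (h1 : θ ≤ π) :
    2 * θ ^ 2 ≤ π ^ 2 * (1 - Real.cos θ) := by
  have hπ := Real.pi_pos
  have hs : 2 / π * (θ / 2) ≤ Real.sin (θ / 2) :=
    Real.mul_le_sin (by linarith) (by linarith)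
  have h2 : π * (2 / π * (θ / 2)) = θ := by field_simp
  have hs' : θ ≤ π * Real.sin (θ / 2) := by
    nlinarith [mul_le_mul_of_nonneg_left hs hπ.le]
  have hsnn : 0 ≤ Real.sin (θ / 2) :=
    Real.sin_nonneg_of_nonneg_of_le_pi (by linarith) (by linarith)
  have hcos : Real.cos θ = 1 - 2 * Real.sin (θ / 2) ^ 2 := by
    have h3 : Real.cos (2 * (θ / 2)) = 2 * Real.cos (θ / 2) ^ 2 - 1 := Real.cos_two_mul _
    rw [show 2 * (θ / 2) = θ by ring] at h3
    nlinarith [Real.sin_sq_add_cos_sq (θ / 2)]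
  rw [hcos]
  nlinarith [mul_le_mul hs' hs' h0 (by positivity : (0:ℝ) ≤ π * Real.sin (θ / 2))]

set_option maxHeartbeats 1600000 in
lemma key_real (a b c θ σ ρ : ℝ) (ha : 0 < a) (hb : 0 < b) (hc : 0 ≤ c)
    (hθ0 : 0 ≤ θ) (hθπ : θ ≤ π) (hσ : σ = 1 ∨ σ = -1) (hρ : ρ = 1 ∨ ρ = -1)
    (hc2 : c ^ 2 = a ^ 2 + b ^ 2 - 2 * σ * a * b * Real.cos θ) :
    min a b * θ ^ 2 ≤ π ^ 2 * |a - σ * b - ρ * c| := by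
  have hπ := Real.pi_pos
  have hJ := jordan_cos' hθ0 hθπ
  have hθπ2 : θ ^ 2 ≤ π ^ 2 := by nlinarith
  have hcos1 : Real.cos θ ≤ 1 := Real.cos_le_one θ
  have hcosm : -1 ≤ Real.cos θ := Real.neg_one_le_cos θ
  have habθ : 0 ≤ a * b * θ ^ 2 := by positivity
  rcases hσ with rfl | rfl
  · -- c² - (a-b)² = 2ab(1-cosθ)
    have hK : 4 * (a * b) * θ ^ 2 ≤ π ^ 2 * (c ^ 2 - (a - b) ^ 2) := by
      nlinarith [mul_le_mul_of_nonneg_left hJ (by positivity : (0:ℝ) ≤ 2 * (a * b))]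
    have hsq : (a - b) ^ 2 ≤ c ^ 2 := by
      nlinarith [mul_nonneg (mul_pos ha hb).le (by linarith : (0:ℝ) ≤ 1 - Real.cos θ)]
    have hge : |a - b| ≤ c := by
      nlinarith [sq_abs (a - b), abs_nonneg (a - b),
        (by linarith [abs_nonneg (a - b)] : (0:ℝ) ≤ |a - b| + c)]
    have hle : c ≤ a + b := by
      nlinarith [mul_pos ha hb, (by linarith : (0:ℝ) < c + (a + b))]
    rcases hρ with rfl | rfl
    · rcases le_or_gt b a with hab | hab
      · have h1 : a - b ≤ c := (le_abs_self _).trans hge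
        have hE : |a - 1 * b - 1 * c| = c - (a - b) := by
          rw [abs_of_nonpos (by linarith)]; ring
        rw [hE, min_eq_right hab]
        have hE0 : 0 ≤ c - (a - b) := by linarith
        have hP : 4 * (a * b) * θ ^ 2 ≤ π ^ 2 * (c - (a - b)) * (2 * a) := by
          nlinarith [mul_nonneg (mul_nonneg (sq_nonneg π) hE0) (by linarith : (0:ℝ) ≤ a + b - c)]
        nlinarith [hP, habθ, ha]
      · have hE : |a - 1 * b - 1 * c| = c + (b - a) := by
          rw [abs_of_nonpos (by linarith)]; ring
        rw [hE, min_eq_left hab.le]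
        have hcsq : 4 * a ^ 2 * θ ^ 2 ≤ π ^ 2 * c ^ 2 := by
          nlinarith [hK, mul_nonneg (sq_nonneg π) (sq_nonneg (a - b)),
            mul_nonneg (by linarith : (0:ℝ) ≤ b - a) (by positivity : (0:ℝ) ≤ 4 * a * θ ^ 2)]
        have hcl : 2 * a * θ ≤ π * c := by
          have := (pow_le_pow_iff_left₀ (by positivity : (0:ℝ) ≤ 2 * a * θ)
            (by positivity : (0:ℝ) ≤ π * c) two_ne_zero).mp (by nlinarith [hcsq])
          exact this
        linarith [mul_le_mul_of_nonneg_right hcl hθ0,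
          mul_le_mul_of_nonneg_left hθπ (mul_nonneg hπ.le hc),
          mul_nonneg (mul_nonneg ha.le hθ0) hθ0,
          mul_nonneg (sq_nonneg π) (by linarith : (0:ℝ) ≤ b - a)]
    · rcases le_or_gt a b with hab | hab
      · have h1 : b - a ≤ c := by
          calc b - a ≤ |a - b| := by rw [abs_sub_comm]; exact le_abs_self _
          _ ≤ c := hge
        have hE : |a - 1 * b - -1 * c| = c - (b - a) := by
          rw [abs_of_nonneg (by linarith)]; ring
        rw [hE, min_eq_left hab]
        have hE0 : 0 ≤ c - (b - a) := by linarith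
        have hP : 4 * (a * b) * θ ^ 2 ≤ π ^ 2 * (c - (b - a)) * (2 * b) := by
          nlinarith [mul_nonneg (mul_nonneg (sq_nonneg π) hE0) (by linarith : (0:ℝ) ≤ a + b - c)]
        nlinarith [hP, habθ, hb]
      · have hE : |a - 1 * b - -1 * c| = c + (a - b) := by
          rw [abs_of_nonneg (by linarith)]; ring
        rw [hE, min_eq_right hab.le]
        have hcsq : 4 * b ^ 2 * θ ^ 2 ≤ π ^ 2 * c ^ 2 := by
          nlinarith [hK, mul_nonneg (sq_nonneg π) (sq_nonneg (a - b)),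
            mul_nonneg (by linarith : (0:ℝ) ≤ a - b) (by positivity : (0:ℝ) ≤ 4 * b * θ ^ 2)]
        have hcl : 2 * b * θ ≤ π * c := by
          have := (pow_le_pow_iff_left₀ (by positivity : (0:ℝ) ≤ 2 * b * θ)
            (by positivity : (0:ℝ) ≤ π * c) two_ne_zero).mp (by nlinarith [hcsq])
          exact this
        linarith [mul_le_mul_of_nonneg_right hcl hθ0,
          mul_le_mul_of_nonneg_left hθπ (mul_nonneg hπ.le hc),
          mul_nonneg (mul_nonneg hb.le hθ0) hθ0,
          mul_nonneg (sq_nonneg π) (by linarith : (0:ℝ) ≤ a - b)]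
  · -- (a+b)² - c² = 2ab(1-cosθ)
    have hK : 4 * (a * b) * θ ^ 2 ≤ π ^ 2 * ((a + b) ^ 2 - c ^ 2) := by
      nlinarith [mul_le_mul_of_nonneg_left hJ (by positivity : (0:ℝ) ≤ 2 * (a * b))]
    have hsq : c ^ 2 ≤ (a + b) ^ 2 := by
      nlinarith [mul_nonneg (mul_pos ha hb).le (by linarith : (0:ℝ) ≤ 1 - Real.cos θ)]
    have hle : c ≤ a + b := by
      nlinarith [hsq, (by linarith : (0:ℝ) < c + (a + b))]
    rcases hρ with rfl | rfl
    · have hE : |a - -1 * b - 1 * c| = a + b - c := by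
        rw [abs_of_nonneg (by linarith)]; ring
      rw [hE]
      have hE0 : 0 ≤ a + b - c := by linarith
      rcases le_total a b with hab | hab
      · rw [min_eq_left hab]
        have hP : 4 * (a * b) * θ ^ 2 ≤ π ^ 2 * (a + b - c) * (4 * b) := by
          nlinarith [hK, mul_nonneg (mul_nonneg (sq_nonneg π) hE0)
            (by linarith : (0:ℝ) ≤ 4 * b - (a + b + c))]
        nlinarith [hP, habθ, hb]
      · rw [min_eq_right hab]
        have hP : 4 * (a * b) * θ ^ 2 ≤ π ^ 2 * (a + b - c) * (4 * a) := by
          nlinarith [hK, mul_nonneg (mul_nonneg (sq_nonneg π) hE0)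
            (by linarith : (0:ℝ) ≤ 4 * a - (a + b + c))]
        nlinarith [hP, habθ, ha]
    · have hE : |a - -1 * b - -1 * c| = a + b + c := by
        rw [abs_of_nonneg (by linarith)]; ring
      rw [hE]
      rcases le_total a b with hab | hab
      · rw [min_eq_left hab]
        nlinarith [mul_nonneg (sq_nonneg π) (by linarith : (0:ℝ) ≤ b + c),
          mul_le_mul_of_nonneg_left hθπ2 ha.le]
      · rw [min_eq_right hab]
        nlinarith [mul_nonneg (sq_nonneg π) (by linarith : (0:ℝ) ≤ a + c),
          mul_le_mul_of_nonneg_left hθπ2 hb.le]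


theorem angles_lemma_basic :
    ∃ C : ℝ, 0 < C ∧
      ∀ (τ₀ τ₁ τ₂ : ℝ) (ξ₀ ξ₁ ξ₂ : EuclideanSpace ℝ (Fin 2)) (s₀ s₁ s₂ : ℝ),
        (s₀ = 1 ∨ s₀ = -1) → (s₁ = 1 ∨ s₁ = -1) → (s₂ = 1 ∨ s₂ = -1) →
        τ₀ = τ₁ - τ₂ → ξ₀ = ξ₁ - ξ₂ →
        ξ₀ ≠ 0 → ξ₁ ≠ 0 → ξ₂ ≠ 0 →
        C * (min ‖ξ₁‖ ‖ξ₂‖ * angle (s₁ • ξ₁) (s₂ • ξ₂) ^ 2)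
          ≤ max (|τ₀ + s₀ * ‖ξ₀‖|) (max (|τ₁ + s₁ * ‖ξ₁‖|) (|τ₂ + s₂ * ‖ξ₂‖|)) := by
  have hπ := Real.pi_pos
  refine ⟨1 / (3 * π ^ 2), by positivity, ?_⟩
  intro τ₀ τ₁ τ₂ ξ₀ ξ₁ ξ₂ s₀ s₁ s₂ hs₀ hs₁ hs₂ hτ hξ h₀ h₁ h₂
  set θ := angle (s₁ • ξ₁) (s₂ • ξ₂) with hθdef
  set a := ‖ξ₁‖; set b := ‖ξ₂‖; set c := ‖ξ₀‖ with hcdef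
  have ha : 0 < a := norm_pos_iff.mpr h₁
  have hb : 0 < b := norm_pos_iff.mpr h₂
  have hcn : (0:ℝ) ≤ c := norm_nonneg _
  have habs1 : |s₁| = 1 := by rcases hs₁ with rfl | rfl <;> norm_num
  have habs2 : |s₂| = 1 := by rcases hs₂ with rfl | rfl <;> norm_num
  have hn1 : ‖s₁ • ξ₁‖ = a := by rw [norm_smul, Real.norm_eq_abs, habs1, one_mul]
  have hn2 : ‖s₂ • ξ₂‖ = b := by rw [norm_smul, Real.norm_eq_abs, habs2, one_mul]
  set I := (inner ℝ ξ₁ ξ₂ : ℝ) with hI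
  have hca := cos_angle (s₁ • ξ₁) (s₂ • ξ₂)
  rw [real_inner_smul_left, real_inner_smul_right, hn1, hn2, ← hI, ← hθdef,
    eq_div_iff (by positivity : a * b ≠ 0)] at hca
  have hinner : I = s₁ * s₂ * (a * b) * Real.cos θ := by
    rcases hs₁ with rfl | rfl <;> rcases hs₂ with rfl | rfl <;> linarith [hca]
  have hc2 : c ^ 2 = a ^ 2 + b ^ 2 - 2 * (s₁ * s₂) * a * b * Real.cos θ := by
    have hc' : c = ‖ξ₁ - ξ₂‖ := by rw [hcdef, hξ]
    rw [hc', @norm_sub_sq_real, ← hI, hinner]; ring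
  have hkey := key_real a b c θ (s₁ * s₂) (s₁ * s₀) ha hb hcn
    (angle_nonneg _ _) (angle_le_pi _ _)
    (by rcases hs₁ with rfl | rfl <;> rcases hs₂ with rfl | rfl <;> norm_num)
    (by rcases hs₁ with rfl | rfl <;> rcases hs₀ with rfl | rfl <;> norm_num)
    hc2
  have habs : |a - s₁ * s₂ * b - s₁ * s₀ * c| = |s₁ * a - s₂ * b - s₀ * c| := by
    rcases hs₁ with rfl | rfl
    · norm_num
    · rw [← abs_neg]; congr 1; ring
  rw [habs] at hkey
  set M := max (|τ₀ + s₀ * c|) (max (|τ₁ + s₁ * a|) (|τ₂ + s₂ * b|)) with hM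
  have hM0 : |τ₀ + s₀ * c| ≤ M := le_max_left _ _
  have hM1 : |τ₁ + s₁ * a| ≤ M := le_trans (le_max_left _ _) (le_max_right _ _)
  have hM2 : |τ₂ + s₂ * b| ≤ M := le_trans (le_max_right _ _) (le_max_right _ _)
  have h3 : |s₁ * a - s₂ * b - s₀ * c| ≤ 3 * M := by
    have heq : s₁ * a - s₂ * b - s₀ * c
        = (τ₁ + s₁ * a) - (τ₂ + s₂ * b) - (τ₀ + s₀ * c) := by rw [hτ]; ring
    rw [heq]
    calc |(τ₁ + s₁ * a) - (τ₂ + s₂ * b) - (τ₀ + s₀ * c)|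
        ≤ |(τ₁ + s₁ * a) - (τ₂ + s₂ * b)| + |τ₀ + s₀ * c| := abs_sub _ _
      _ ≤ |τ₁ + s₁ * a| + |τ₂ + s₂ * b| + |τ₀ + s₀ * c| := by
          linarith [abs_sub (τ₁ + s₁ * a) (τ₂ + s₂ * b)]
      _ ≤ 3 * M := by linarith
  have hfin : min a b * θ ^ 2 ≤ 3 * π ^ 2 * M := by nlinarith [hkey, sq_nonneg π]
  rw [one_div, inv_mul_le_iff₀ (by positivity : (0:ℝ) < 3 * π ^ 2)]
  linarith

end
end

section
/- Let (X₀,X₁,X₂) be a bilinear interaction X₀ = X₁ − X₂ with all ξ_j ≠ 0, signs ±₀,±₁,±₂, hyperbolic weights h_j = τ_j ±_j |ξ_j| and angles θ_{jk} = θ(±_jξ_j, ±_kξ_k). If it is NOT the case that (|ξ₀| ≪ |ξ₁| ∼ |ξ₂| and ±₁ ≠ ±₂), then max(|h₀|,|h₁|,|h₂|) ≳ |ξ₁||ξ₂|θ₁₂²/|ξ₀|; and if |ξ₀| ≪ |ξ₁| ∼ |ξ₂| and ±₁ ≠ ±₂, then θ₁₂ ∼ 1 and max(|h₀|,|h₁|,|h₂|)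 ≳ min(|ξ₁|,|ξ₂|). -/
/- STATEMENT 9 (dichotomy part of Lemma `AnglesLemma`): for a bilinear interaction
   X₀ = X₁ − X₂ with nonzero spatial frequencies, either
   (|ξ₀| ≪ |ξ₁| ∼ |ξ₂| and ±₁ ≠ ±₂), in which case θ₁₂ ∼ 1 and
   max|h_j| ≳ min(|ξ₁|,|ξ₂|); or else max|h_j| ≳ |ξ₁||ξ₂|θ₁₂²/|ξ₀|.
   The thresholds ≪, ∼ use a suitable absolute constant K, and the implicit
   constants c in the conclusions are absolute. -/

open InnerProductGeometry
open RealInnerProductSpace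

noncomputable section

/-- `|ξ₀| ≪ |ξ₁| ∼ |ξ₂|` with threshold constant `K`. -/
def LowOutput (K : ℝ) (ξ₀ ξ₁ ξ₂ : EuclideanSpace ℝ (Fin 2)) : Prop :=
  K * ‖ξ₀‖ ≤ ‖ξ₁‖ ∧ ‖ξ₁‖ ≤ K * ‖ξ₂‖ ∧ ‖ξ₂‖ ≤ K * ‖ξ₁‖

lemma two_sq_le_aux (θ : ℝ) (h0 : 0 ≤ θ) (h1 : θ ≤ Real.pi) :
    2 * θ ^ 2 ≤ Real.pi ^ 2 * (1 - Real.cos θ) := by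
  have hπ := Real.pi_pos
  have hs : 2 / Real.pi * (θ / 2) ≤ Real.sin (θ / 2) :=
    Real.mul_le_sin (by linarith) (by linarith)
  have hc : Real.cos θ = 1 - 2 * Real.sin (θ / 2) ^ 2 := by
    have h2m := Real.cos_two_mul (θ / 2)
    have hsc := Real.sin_sq_add_cos_sq (θ / 2)
    rw [show 2 * (θ / 2) = θ by ring] at h2m
    linarith
  have ht : 0 ≤ 2 / Real.pi * (θ / 2) := by positivity
  have hsq : (2 / Real.pi * (θ / 2)) ^ 2 ≤ Real.sin (θ / 2) ^ 2 := by nlinarith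
  have heq : (2 / Real.pi * (θ / 2)) ^ 2 = θ ^ 2 / Real.pi ^ 2 := by field_simp
  rw [heq] at hsq
  rw [hc]
  have := (div_le_iff₀ (by positivity : (0:ℝ) < Real.pi ^ 2)).mp hsq
  nlinarith

/-- Purely arithmetic core, equal-sign case. -/
lemma core_same (a b d θ M s₀ s₁ s₂ : ℝ)
    (hs₀ : s₀ = 1 ∨ s₀ = -1) (hs₁ : s₁ = 1 ∨ s₁ = -1) (hs₂ : s₂ = 1 ∨ s₂ = -1)
    (hsame : s₁ = s₂)
    (ha0 : 0 < a) (hb0 : 0 < b) (hd0 : 0 < d)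
    (hθ0 : 0 ≤ θ) (hθπ : θ ≤ Real.pi)
    (hkey : 2 * θ ^ 2 ≤ Real.pi ^ 2 * (1 - Real.cos θ))
    (hlaw : d ^ 2 = a ^ 2 + b ^ 2 - 2 * ((s₁ * s₂) * (Real.cos θ * (a * b))))
    (hcomb : |s₁ * a - s₂ * b - s₀ * d| ≤ 3 * M)
    (hM0 : 0 ≤ M) :
    (1/1000 : ℝ) * (a * b * θ ^ 2) ≤ M * d := by
  have hπ := Real.pi_pos
  have hπ4 := Real.pi_le_four
  have hcos1 : Real.cos θ ≤ 1 := Real.cos_le_one θ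
  have hs₀a : |s₀| = 1 := by rcases hs₀ with h | h <;> simp [h]
  have hs₁a : |s₁| = 1 := by rcases hs₁ with h | h <;> simp [h]
  have hss : s₁ * s₂ = 1 := by rcases hs₁ with h | h <;> rw [hsame] at h ⊢ <;> simp [h]
  rw [hss, one_mul] at hlaw
  have hgeom : d ^ 2 - (a - b) ^ 2 = 2 * (a * b) * (1 - Real.cos θ) := by
    linear_combination hlaw
  have hsqle : (a - b) ^ 2 ≤ d ^ 2 := by nlinarith [mul_pos ha0 hb0]
  have habd : |a - b| ≤ d := by
    rw [abs_le]; constructor <;> nlinarith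
  have hE : d - |a - b| ≤ 3 * M := by
    have h1 : |s₁ * (a - b)| = |a - b| := by rw [abs_mul, hs₁a, one_mul]
    have h2 : |s₀ * d| = d := by rw [abs_mul, hs₀a, one_mul, abs_of_pos hd0]
    have h3 : s₁ * a - s₂ * b - s₀ * d = s₁ * (a - b) - s₀ * d := by
      rw [← hsame]; ring
    rw [h3] at hcomb
    calc d - |a - b| = |s₀ * d| - |s₁ * (a - b)| := by rw [h1, h2]
      _ ≤ |s₀ * d - s₁ * (a - b)| := abs_sub_abs_le_abs_sub _ _
      _ = |s₁ * (a - b) - s₀ * d| := abs_sub_comm _ _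
      _ ≤ 3 * M := hcomb
  have hprod : d ^ 2 - (a - b) ^ 2 ≤ 3 * M * (2 * d) := by
    have e1 : d ^ 2 - (a - b) ^ 2 = (d - |a - b|) * (d + |a - b|) := by
      rw [← sq_abs (a - b)]; ring
    rw [e1]
    have h4 : (0:ℝ) ≤ d + |a - b| := by positivity
    calc (d - |a - b|) * (d + |a - b|) ≤ 3 * M * (d + |a - b|) :=
          mul_le_mul_of_nonneg_right hE h4
      _ ≤ 3 * M * (2 * d) := by
          apply mul_le_mul_of_nonneg_left _ (by linarith)
          linarith
  -- π²(d² - (a-b)²) ≥ 2ab·2θ², so 4abθ² ≤ 16·6Md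
  have h5 : 2 * (a * b) * (2 * θ ^ 2) ≤ 2 * (a * b) * (Real.pi ^ 2 * (1 - Real.cos θ)) :=
    mul_le_mul_of_nonneg_left hkey (by positivity)
  have h6 : Real.pi ^ 2 ≤ 16 := by nlinarith
  nlinarith [mul_pos ha0 hb0, sq_nonneg θ, mul_nonneg hM0 hd0.le,
    mul_le_mul_of_nonneg_left hprod (show (0:ℝ) ≤ Real.pi ^ 2 by positivity),
    mul_le_mul_of_nonneg_right h6 (mul_nonneg (mul_nonneg (by norm_num : (0:ℝ) ≤ 6) hM0) hd0.le)]

/-- Purely arithmetic core, opposite-sign case: lower bound on a+b-d. -/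
lemma core_opp_E (a b d M s₀ s₁ s₂ : ℝ)
    (hs₀ : s₀ = 1 ∨ s₀ = -1) (hs₁ : s₁ = 1 ∨ s₁ = -1) (hs₂ : s₂ = 1 ∨ s₂ = -1)
    (hsame : s₁ ≠ s₂)
    (ha0 : 0 < a) (hb0 : 0 < b) (hd0 : 0 < d)
    (hcomb : |s₁ * a - s₂ * b - s₀ * d| ≤ 3 * M) :
    (a + b) - d ≤ 3 * M := by
  have hs₀a : |s₀| = 1 := by rcases hs₀ with h | h <;> simp [h]
  have hs₁a : |s₁| = 1 := by rcases hs₁ with h | h <;> simp [h]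
  have hneg : s₂ = -s₁ := by
    rcases hs₁ with h | h <;> rcases hs₂ with h' | h' <;> simp [h, h'] at hsame ⊢
  have h1 : |s₁ * (a + b)| = a + b := by
    rw [abs_mul, hs₁a, one_mul, abs_of_pos (by linarith)]
  have h2 : |s₀ * d| = d := by rw [abs_mul, hs₀a, one_mul, abs_of_pos hd0]
  have h3 : s₁ * a - s₂ * b - s₀ * d = s₁ * (a + b) - s₀ * d := by rw [hneg]; ring
  rw [h3] at hcomb
  calc (a + b) - d = |s₁ * (a + b)| - |s₀ * d| := by rw [h1, h2]
    _ ≤ |s₁ * (a + b) - s₀ * d| := abs_sub_abs_le_abs_sub _ _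
    _ ≤ 3 * M := hcomb

/-- Purely arithmetic core, opposite-sign non-low-output case. -/
lemma core_opp (a b d θ M s₀ s₁ s₂ : ℝ)
    (hs₀ : s₀ = 1 ∨ s₀ = -1) (hs₁ : s₁ = 1 ∨ s₁ = -1) (hs₂ : s₂ = 1 ∨ s₂ = -1)
    (hsame : s₁ ≠ s₂)
    (ha0 : 0 < a) (hb0 : 0 < b) (hd0 : 0 < d)
    (hθ0 : 0 ≤ θ) (hθπ : θ ≤ Real.pi)
    (hkey : 2 * θ ^ 2 ≤ Real.pi ^ 2 * (1 - Real.cos θ))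
    (hlaw : d ^ 2 = a ^ 2 + b ^ 2 - 2 * ((s₁ * s₂) * (Real.cos θ * (a * b))))
    (hcomb : |s₁ * a - s₂ * b - s₀ * d| ≤ 3 * M)
    (hM0 : 0 ≤ M)
    (htri : d ≤ a + b) (htri1 : a ≤ d + b) (htri2 : b ≤ a + d)
    (hlow : ¬ (4 * d ≤ a ∧ a ≤ 4 * b ∧ b ≤ 4 * a)) :
    (1/1000 : ℝ) * (a * b * θ ^ 2) ≤ M * d := by
  have hπ := Real.pi_pos
  have hπ4 := Real.pi_le_four
  have hcos1 : Real.cos θ ≤ 1 := Real.cos_le_one θ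
  have hss : s₁ * s₂ = -1 := by
    rcases hs₁ with h | h <;> rcases hs₂ with h' | h' <;> simp [h, h'] at hsame ⊢
  rw [hss] at hlaw
  have hgeom : (a + b) ^ 2 - d ^ 2 = 2 * (a * b) * (1 - Real.cos θ) := by
    linear_combination -hlaw
  have h9 : a + b ≤ 9 * d := by
    rcases not_and_or.mp hlow with h | h
    · push_neg at h; linarith
    · rcases not_and_or.mp h with h | h <;> push_neg at h <;> linarith
  have hE : (a + b) - d ≤ 3 * M := core_opp_E a b d M s₀ s₁ s₂ hs₀ hs₁ hs₂ hsame ha0 hb0 hd0 hcomb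
  have hprod : (a + b) ^ 2 - d ^ 2 ≤ 3 * M * (10 * d) := by
    have e1 : (a + b) ^ 2 - d ^ 2 = ((a + b) - d) * ((a + b) + d) := by ring
    rw [e1]
    calc ((a + b) - d) * ((a + b) + d) ≤ 3 * M * ((a + b) + d) :=
          mul_le_mul_of_nonneg_right hE (by linarith)
      _ ≤ 3 * M * (10 * d) := by
          apply mul_le_mul_of_nonneg_left _ (by linarith)
          linarith
  have h5 : 2 * (a * b) * (2 * θ ^ 2) ≤ 2 * (a * b) * (Real.pi ^ 2 * (1 - Real.cos θ)) :=
    mul_le_mul_of_nonneg_left hkey (by positivity)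
  have h6 : Real.pi ^ 2 ≤ 16 := by nlinarith
  nlinarith [mul_pos ha0 hb0, sq_nonneg θ, mul_nonneg hM0 hd0.le,
    mul_le_mul_of_nonneg_left hprod (show (0:ℝ) ≤ Real.pi ^ 2 by positivity),
    mul_le_mul_of_nonneg_right h6 (mul_nonneg (mul_nonneg (by norm_num : (0:ℝ) ≤ 30) hM0) hd0.le)]

lemma core_cosneg (a b d θ : ℝ) (ha0 : 0 < a) (hb0 : 0 < b) (hd0 : 0 < d)
    (hlaw : d ^ 2 = a ^ 2 + b ^ 2 - 2 * ((-1) * (Real.cos θ * (a * b))))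
    (p : 4 * d ≤ a) (q : a ≤ 4 * b) : Real.cos θ < 0 := by
  have hd2 : d ^ 2 ≤ a * b / 4 := by nlinarith
  nlinarith [mul_pos ha0 hb0]

theorem angles_lemma_dichotomy :
    ∃ K : ℝ, 1 ≤ K ∧ ∃ c : ℝ, 0 < c ∧
      ∀ (τ₀ τ₁ τ₂ : ℝ) (ξ₀ ξ₁ ξ₂ : EuclideanSpace ℝ (Fin 2)) (s₀ s₁ s₂ : ℝ),
        (s₀ = 1 ∨ s₀ = -1) → (s₁ = 1 ∨ s₁ = -1) → (s₂ = 1 ∨ s₂ = -1) →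
        τ₀ = τ₁ - τ₂ → ξ₀ = ξ₁ - ξ₂ →
        ξ₀ ≠ 0 → ξ₁ ≠ 0 → ξ₂ ≠ 0 →
        (¬ (LowOutput K ξ₀ ξ₁ ξ₂ ∧ s₁ ≠ s₂) →
          c * (‖ξ₁‖ * ‖ξ₂‖ * angle (s₁ • ξ₁) (s₂ • ξ₂) ^ 2 / ‖ξ₀‖)
            ≤ max (|τ₀ + s₀ * ‖ξ₀‖|) (max (|τ₁ + s₁ * ‖ξ₁‖|) (|τ₂ + s₂ * ‖ξ₂‖|))) ∧
        ((LowOutput K ξ₀ ξ₁ ξ₂ ∧ s₁ ≠ s₂) →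
          c ≤ angle (s₁ • ξ₁) (s₂ • ξ₂) ∧
          c * min ‖ξ₁‖ ‖ξ₂‖
            ≤ max (|τ₀ + s₀ * ‖ξ₀‖|) (max (|τ₁ + s₁ * ‖ξ₁‖|) (|τ₂ + s₂ * ‖ξ₂‖|))) := by
  refine ⟨4, by norm_num, 1/1000, by norm_num, ?_⟩
  intro τ₀ τ₁ τ₂ ξ₀ ξ₁ ξ₂ s₀ s₁ s₂ hs₀ hs₁ hs₂ hτ hξ hne₀ hne₁ hne₂
  set a := ‖ξ₁‖ with ha
  set b := ‖ξ₂‖ with hb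
  set d := ‖ξ₀‖ with hd
  set θ := angle (s₁ • ξ₁) (s₂ • ξ₂) with hθ
  set M := max (|τ₀ + s₀ * d|) (max (|τ₁ + s₁ * a|) (|τ₂ + s₂ * b|)) with hMdef
  have ha0 : (0:ℝ) < a := norm_pos_iff.mpr hne₁
  have hb0 : (0:ℝ) < b := norm_pos_iff.mpr hne₂
  have hd0 : (0:ℝ) < d := norm_pos_iff.mpr hne₀
  have hθ0 : 0 ≤ θ := angle_nonneg _ _
  have hθπ : θ ≤ Real.pi := angle_le_pi _ _
  have hkey : 2 * θ ^ 2 ≤ Real.pi ^ 2 * (1 - Real.cos θ) := two_sq_le_aux θ hθ0 hθπ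
  have hs₀a : |s₀| = 1 := by rcases hs₀ with h | h <;> simp [h]
  have hs₁a : |s₁| = 1 := by rcases hs₁ with h | h <;> simp [h]
  have hs₂a : |s₂| = 1 := by rcases hs₂ with h | h <;> simp [h]
  -- inner product identity
  have hinner : (⟪ξ₁, ξ₂⟫ : ℝ) = (s₁ * s₂) * (Real.cos θ * (a * b)) := by
    have h1 : Real.cos θ * (‖s₁ • ξ₁‖ * ‖s₂ • ξ₂‖) = ⟪s₁ • ξ₁, s₂ • ξ₂⟫ :=
      cos_angle_mul_norm_mul_norm _ _
    have h2 : (⟪s₁ • ξ₁, s₂ • ξ₂⟫ : ℝ) = s₁ * (s₂ * ⟪ξ₁, ξ₂⟫) := by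
      rw [real_inner_smul_left, real_inner_smul_right]
    have h3 : ‖s₁ • ξ₁‖ = a := by rw [norm_smul, Real.norm_eq_abs, hs₁a, one_mul]
    have h4 : ‖s₂ • ξ₂‖ = b := by rw [norm_smul, Real.norm_eq_abs, hs₂a, one_mul]
    rw [h3, h4, h2] at h1
    have hss : s₁ * s₁ = 1 := by rcases hs₁ with h | h <;> simp [h]
    have hss2 : s₂ * s₂ = 1 := by rcases hs₂ with h | h <;> simp [h]
    linear_combination (-(s₁*s₂))*h1 - (⟪ξ₁, ξ₂⟫ : ℝ)*hss - (⟪ξ₁, ξ₂⟫ : ℝ)*s₁*s₁*hss2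
  -- law of cosines
  have hlaw : d ^ 2 = a ^ 2 + b ^ 2 - 2 * ((s₁ * s₂) * (Real.cos θ * (a * b))) := by
    have hns := norm_sub_sq_real ξ₁ ξ₂
    rw [← hinner, hd, hξ, ha, hb]
    linarith [hns]
  -- bound on combination of weights
  have hM0 : 0 ≤ M := le_trans (abs_nonneg _) (le_max_left _ _)
  have hcomb : |s₁ * a - s₂ * b - s₀ * d| ≤ 3 * M := by
    have e : s₁ * a - s₂ * b - s₀ * d
        = (τ₁ + s₁ * a) - (τ₂ + s₂ * b) - (τ₀ + s₀ * d) := by rw [hτ]; ring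
    have h0 : |τ₀ + s₀ * d| ≤ M := le_max_left _ _
    have h1 : |τ₁ + s₁ * a| ≤ M := le_trans (le_max_left _ _) (le_max_right _ _)
    have h2 : |τ₂ + s₂ * b| ≤ M := le_trans (le_max_right _ _) (le_max_right _ _)
    rw [e]
    calc |(τ₁ + s₁ * a) - (τ₂ + s₂ * b) - (τ₀ + s₀ * d)|
        ≤ |(τ₁ + s₁ * a) - (τ₂ + s₂ * b)| + |τ₀ + s₀ * d| := abs_sub _ _
      _ ≤ (|τ₁ + s₁ * a| + |τ₂ + s₂ * b|) + |τ₀ + s₀ * d| := by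
            gcongr; exact abs_sub _ _
      _ ≤ 3 * M := by linarith
  have htri : d ≤ a + b := by rw [hd, hξ, ha, hb]; exact norm_sub_le _ _
  have htri1 : a ≤ d + b := by
    rw [hd, hξ, ha, hb]
    calc ‖ξ₁‖ = ‖(ξ₁ - ξ₂) + ξ₂‖ := by rw [sub_add_cancel]
      _ ≤ ‖ξ₁ - ξ₂‖ + ‖ξ₂‖ := norm_add_le _ _
  have htri2 : b ≤ a + d := by
    rw [hd, hξ, ha, hb]
    calc ‖ξ₂‖ = ‖ξ₁ - (ξ₁ - ξ₂)‖ := by rw [sub_sub_cancel]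
      _ ≤ ‖ξ₁‖ + ‖ξ₁ - ξ₂‖ := norm_sub_le _ _
  have hLiff : LowOutput 4 ξ₀ ξ₁ ξ₂ ↔ (4 * d ≤ a ∧ a ≤ 4 * b ∧ b ≤ 4 * a) := by
    unfold LowOutput; rw [← ha, ← hb, ← hd]
  clear_value a b d θ M
  constructor
  · -- first conclusion
    intro hnot
    have hgoal : (1/1000 : ℝ) * (a * b * θ ^ 2) ≤ M * d := by
      by_cases hsame : s₁ = s₂
      · exact core_same a b d θ M s₀ s₁ s₂ hs₀ hs₁ hs₂ hsame ha0 hb0 hd0 hθ0 hθπ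
          hkey hlaw hcomb hM0
      · have hlow : ¬ (4 * d ≤ a ∧ a ≤ 4 * b ∧ b ≤ 4 * a) := by
          intro hc
          exact hnot ⟨hLiff.mpr hc, hsame⟩
        exact core_opp a b d θ M s₀ s₁ s₂ hs₀ hs₁ hs₂ hsame ha0 hb0 hd0 hθ0 hθπ
          hkey hlaw hcomb hM0 htri htri1 htri2 hlow
    have e2 : (1/1000 : ℝ) * (a * b * θ ^ 2 / d) = (1/1000 : ℝ) * (a * b * θ ^ 2) / d := by
      ring
    rw [e2, div_le_iff₀ hd0]
    exact hgoal
  · -- second conclusion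
    rintro ⟨hL, hsame⟩
    obtain ⟨p, q, r⟩ := hLiff.mp hL
    have hss : s₁ * s₂ = -1 := by
      rcases hs₁ with h | h <;> rcases hs₂ with h' | h' <;> simp [h, h'] at hsame ⊢
    rw [hss] at hlaw
    have hcosneg : Real.cos θ < 0 := core_cosneg a b d θ ha0 hb0 hd0 hlaw p q
    have hθge : Real.pi / 2 < θ := by
      by_contra h
      push_neg at h
      exact absurd (Real.cos_nonneg_of_mem_Icc ⟨by linarith [Real.pi_pos], h⟩)
        (not_le.mpr hcosneg)
    constructor
    · nlinarith [Real.pi_gt_three]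
    · have hE : (a + b) - d ≤ 3 * M :=
        core_opp_E a b d M s₀ s₁ s₂ hs₀ hs₁ hs₂ hsame ha0 hb0 hd0 hcomb
      have hmin : min a b ≤ b := min_le_right _ _
      linarith
end
end

section
/- Let N₀ > 0, r > 0, ω ∈ 𝕊¹ and ψ₀ ∈ L²(ℝ²). Then ‖P_{T_r(ω)} P_{⟨ξ⟩∼N₀} (|ψ₀|²)‖_{L²} ≲ (rN₀)^{1/2} ‖ψ₀‖²_{L²}, with implicit constant independent of N₀, r, ω, ψ₀. -/
/- STATEMENT 18 (estimate (S:56)): for a strip T_r(ω) of width ≲ r around ℝω and the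
   annulus ⟨ξ⟩ ∼ N₀,
   ‖P_{T_r(ω)} P_{⟨ξ⟩∼N₀}(|ψ₀|²)‖_{L²} ≲ (rN₀)^{1/2}‖ψ₀‖²_{L²}.
   Formalized on the Fourier side via Plancherel: ψ stands for the Fourier transform
   of ψ₀ (an arbitrary L² function), and the Fourier transform of |ψ₀|² is the
   convolution ξ ↦ ∫ ψ(η) conj(ψ(η − ξ)) dη.  The implicit constant c in the width
   of the strip is fixed in advance; C is then uniform. -/

open MeasureTheory
open scoped RealInnerProductSpace ENNReal

noncomputable section

theorem strip_annulus_product_estimate (c : ℝ) (hc : 0 < c) :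
    ∃ C : ℝ, 0 < C ∧
      ∀ (N₀ r : ℝ), 0 < N₀ → 0 < r →
        ∀ ω : EuclideanSpace ℝ (Fin 2), ‖ω‖ = 1 →
          ∀ ψ : EuclideanSpace ℝ (Fin 2) → ℂ, MemLp ψ 2 volume →
            eLpNorm (Set.indicator
                {ξ : EuclideanSpace ℝ (Fin 2) |
                  ‖ξ - ⟪ξ, ω⟫ • ω‖ ≤ c * r ∧
                  N₀ ≤ Real.sqrt (1 + ‖ξ‖ ^ 2) ∧ Real.sqrt (1 + ‖ξ‖ ^ 2) < 2 * N₀}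
                (fun ξ => ∫ η : EuclideanSpace ℝ (Fin 2),
                  ψ η * (starRingEnd ℂ) (ψ (η - ξ)))) 2 volume
              ≤ ENNReal.ofReal (C * (r * N₀) ^ ((1:ℝ)/2)) *
                  (eLpNorm ψ 2 volume * eLpNorm ψ 2 volume) := by
  refine ⟨Real.sqrt (8 * c), Real.sqrt_pos.2 (by linarith), ?_⟩
  intro N₀ r hN hr ω hω ψ hψ
  set s : Set (EuclideanSpace ℝ (Fin 2)) := {ξ : EuclideanSpace ℝ (Fin 2) |
      ‖ξ - ⟪ξ, ω⟫ • ω‖ ≤ c * r ∧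
      N₀ ≤ Real.sqrt (1 + ‖ξ‖ ^ 2) ∧ Real.sqrt (1 + ‖ξ‖ ^ 2) < 2 * N₀} with hs_def
  set F : EuclideanSpace ℝ (Fin 2) → ℂ := fun ξ => ∫ η : EuclideanSpace ℝ (Fin 2), ψ η * (starRingEnd ℂ) (ψ (η - ξ)) with hF_def
  set A : ℝ≥0∞ := eLpNorm ψ 2 volume with hA_def
  -- measurability of s
  have hcont1 : Continuous fun ξ : EuclideanSpace ℝ (Fin 2) => ‖ξ - ⟪ξ, ω⟫ • ω‖ :=
    by fun_prop
  have hcont2 : Continuous fun ξ : EuclideanSpace ℝ (Fin 2) => Real.sqrt (1 + ‖ξ‖ ^ 2) :=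
    (continuous_const.add (continuous_norm.pow 2)).sqrt
  have hs : MeasurableSet s :=
    (measurableSet_le hcont1.measurable measurable_const).inter
      ((measurableSet_le measurable_const hcont2.measurable).inter
        (measurableSet_lt hcont2.measurable measurable_const))
  -- pointwise bound
  have hpt : ∀ ξ : EuclideanSpace ℝ (Fin 2), (‖F ξ‖₊ : ℝ≥0∞) ≤ A * A := by
    intro ξ
    have hmp : MeasurePreserving (fun η : EuclideanSpace ℝ (Fin 2) => η - ξ) volume volume :=
      measurePreserving_sub_right volume ξ
    have hshift : AEStronglyMeasurable (fun η => ψ (η - ξ)) (volume : Measure (EuclideanSpace ℝ (Fin 2))) :=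
      hψ.1.comp_quasiMeasurePreserving hmp.quasiMeasurePreserving
    have hsn : A = (∫⁻ η, (‖ψ η‖₊ : ℝ≥0∞) ^ (2:ℝ)) ^ ((1:ℝ)/2) := by
      rw [hA_def, eLpNorm_eq_lintegral_rpow_enorm_toReal (by norm_num) (by norm_num)]
      norm_num
      rfl
    calc (‖F ξ‖₊ : ℝ≥0∞)
        ≤ ∫⁻ η, ‖ψ η * (starRingEnd ℂ) (ψ (η - ξ))‖₊ :=
          enorm_integral_le_lintegral_enorm _
      _ = ∫⁻ η, ((fun η => (‖ψ η‖₊ : ℝ≥0∞)) * fun η => (‖ψ (η - ξ)‖₊ : ℝ≥0∞)) η := by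
          simp [nnnorm_mul, ENNReal.coe_mul]
      _ ≤ (∫⁻ η, (‖ψ η‖₊ : ℝ≥0∞) ^ (2:ℝ)) ^ ((1:ℝ)/2) *
          (∫⁻ η, (‖ψ (η - ξ)‖₊ : ℝ≥0∞) ^ (2:ℝ)) ^ ((1:ℝ)/2) :=
          ENNReal.lintegral_mul_le_Lp_mul_Lq volume ⟨by norm_num, by norm_num, by norm_num⟩
            hψ.1.enorm hshift.enorm
      _ = A * A := by
          rw [hsn]
          congr 2
          exact hmp.lintegral_comp_emb (MeasurableEquiv.subRight ξ).measurableEmbedding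
            (fun η => (‖ψ η‖₊ : ℝ≥0∞) ^ (2:ℝ))
  -- volume bound for s
  have hvol : volume s ≤ ENNReal.ofReal (8 * c * (r * N₀)) := by
    set ω' : EuclideanSpace ℝ (Fin 2) := !₂[-(ω 1), ω 0] with hω'
    have hsum : ω 0 * ω 0 + ω 1 * ω 1 = 1 := by
      have h := real_inner_self_eq_norm_sq ω
      rw [hω, PiLp.inner_apply] at h
      simp [PiLp.inner_apply, Fin.sum_univ_two] at h
      linarith [sq (ω 0), sq (ω 1)]
    have horth : Orthonormal ℝ (![ω, ω'] : Fin 2 → EuclideanSpace ℝ (Fin 2)) := by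
      rw [orthonormal_iff_ite]
      intro i j
      fin_cases i <;> fin_cases j <;>
        · simp only [Matrix.cons_val_zero, Matrix.cons_val_one, Matrix.head_cons, hω',
            PiLp.inner_apply, Fin.sum_univ_two, RCLike.inner_apply, conj_trivial]
          norm_num
          try simp [Matrix.cons_val_zero, Matrix.cons_val_one, Matrix.head_cons]
          try linarith [hsum]
    have hcard : Fintype.card (Fin 2) = Module.finrank ℝ (EuclideanSpace ℝ (Fin 2)) := by
      simp [finrank_euclideanSpace_fin]
    set b0 := basisOfOrthonormalOfCardEqFinrank horth hcard with hb0
    have hb0coe : ⇑b0 = (![ω, ω'] : Fin 2 → EuclideanSpace ℝ (Fin 2)) := coe_basisOfOrthonormalOfCardEqFinrank horth hcard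
    set b : OrthonormalBasis (Fin 2) ℝ (EuclideanSpace ℝ (Fin 2)) :=
      b0.toOrthonormalBasis (by rw [hb0coe]; exact horth) with hb
    have hbcoe : ⇑b = (![ω, ω'] : Fin 2 → EuclideanSpace ℝ (Fin 2)) := by
      rw [hb, Module.Basis.coe_toOrthonormalBasis, hb0coe]
    have hω'norm : ‖ω'‖ = 1 := by
      have := horth.1 1
      simpa using this
    -- inclusion into a box
    have hsub : s ⊆ b.repr ⁻¹' {v : EuclideanSpace ℝ (Fin 2) | |v 0| ≤ 2 * N₀ ∧ |v 1| ≤ c * r} := by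
      rintro ξ ⟨h1, _, h3⟩
      have hrepr0 : b.repr ξ 0 = ⟪ω, ξ⟫ := by
        rw [b.repr_apply_apply, hbcoe]; simp
      have hrepr1 : b.repr ξ 1 = ⟪ω', ξ⟫ := by
        rw [b.repr_apply_apply, hbcoe]; simp
      constructor
      · rw [hrepr0]
        have hle : |⟪ω, ξ⟫| ≤ ‖ξ‖ := by
          simpa [hω] using abs_real_inner_le_norm ω ξ
        have hnle : ‖ξ‖ ≤ Real.sqrt (1 + ‖ξ‖ ^ 2) := by
          nlinarith [Real.sq_sqrt (show (0:ℝ) ≤ 1 + ‖ξ‖ ^ 2 by positivity),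
            Real.sqrt_nonneg (1 + ‖ξ‖ ^ 2), norm_nonneg ξ]
        linarith
      · rw [hrepr1]
        have hperp : ⟪ω', ξ⟫ = ⟪ω', ξ - ⟪ξ, ω⟫ • ω⟫ := by
          have hoo : ⟪ω', ω⟫ = 0 := by
            simp only [hω', PiLp.inner_apply, Fin.sum_univ_two, RCLike.inner_apply, conj_trivial,
              Matrix.cons_val_zero, Matrix.cons_val_one, Matrix.head_cons]
            ring
          rw [inner_sub_right, real_inner_smul_right, hoo]
          ring
        have hle : |⟪ω', ξ - ⟪ξ, ω⟫ • ω⟫| ≤ ‖ξ - ⟪ξ, ω⟫ • ω‖ := by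
          simpa [hω'norm] using abs_real_inner_le_norm ω' (ξ - ⟪ξ, ω⟫ • ω)
        rw [hperp]
        exact hle.trans h1
    have hbox : volume {v : EuclideanSpace ℝ (Fin 2) | |v 0| ≤ 2 * N₀ ∧ |v 1| ≤ c * r}
        = ENNReal.ofReal (2 * (2 * N₀)) * ENNReal.ofReal (2 * (c * r)) := by
      have hset : {v : EuclideanSpace ℝ (Fin 2) | |v 0| ≤ 2 * N₀ ∧ |v 1| ≤ c * r}
          = (MeasurableEquiv.toLp 2 (Fin 2 → ℝ)).symm ⁻¹'
            (Set.univ.pi fun i : Fin 2 =>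
              Set.Icc (-(![2 * N₀, c * r] i)) (![2 * N₀, c * r] i)) := by
        ext v
        simp [MeasurableEquiv.coe_toLp_symm, Fin.forall_fin_two, abs_le, and_assoc,
          Pi.le_def, WithLp.equiv]
        tauto
      rw [hset, (EuclideanSpace.volume_preserving_symm_measurableEquiv_toLp (Fin 2)).measure_preimage
        ((MeasurableSet.univ_pi fun i => measurableSet_Icc).nullMeasurableSet)]
      rw [volume_pi_pi, Fin.prod_univ_two]
      simp [Real.volume_Icc]
      ring_nf
      rw [ENNReal.ofReal_mul hN.le, ENNReal.ofReal_mul (p := c * r) (by positivity)]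
      simp only [ENNReal.ofReal_ofNat]
      ring
    have hBoxMeas : MeasurableSet {v : EuclideanSpace ℝ (Fin 2) | |v 0| ≤ 2 * N₀ ∧ |v 1| ≤ c * r} := by
      have m0 : Measurable fun v : EuclideanSpace ℝ (Fin 2) => v 0 :=
        (MeasurableEquiv.toLp 2 (Fin 2 → ℝ)).symm.measurable.eval
      have m1 : Measurable fun v : EuclideanSpace ℝ (Fin 2) => v 1 :=
        (MeasurableEquiv.toLp 2 (Fin 2 → ℝ)).symm.measurable.eval
      exact (measurableSet_le m0.abs measurable_const).inter
        (measurableSet_le m1.abs measurable_const)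
    calc volume s
        ≤ volume (b.repr ⁻¹' {v : EuclideanSpace ℝ (Fin 2) | |v 0| ≤ 2 * N₀ ∧ |v 1| ≤ c * r}) :=
          measure_mono hsub
      _ = volume {v : EuclideanSpace ℝ (Fin 2) | |v 0| ≤ 2 * N₀ ∧ |v 1| ≤ c * r} :=
          b.measurePreserving_repr.measure_preimage hBoxMeas.nullMeasurableSet
      _ = ENNReal.ofReal (8 * c * (r * N₀)) := by
          rw [hbox, ← ENNReal.ofReal_mul (by positivity)]
          ring_nf
  -- L² bound via the pointwise bound and the measure of s
  have hA2 : eLpNorm (s.indicator F) 2 volume ≤ (A * A) * (volume s) ^ ((1:ℝ)/2) := by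
    have h1 : eLpNorm (s.indicator F) 2 volume
        = (∫⁻ ξ, (‖s.indicator F ξ‖₊ : ℝ≥0∞) ^ (2:ℝ)) ^ ((1:ℝ)/2) := by
      rw [eLpNorm_eq_lintegral_rpow_enorm_toReal (by norm_num) (by norm_num)]
      norm_num
      rfl
    have h2 : (∫⁻ ξ, (‖s.indicator F ξ‖₊ : ℝ≥0∞) ^ (2:ℝ))
        ≤ ((A * A) ^ (2:ℝ)) * volume s := by
      calc ∫⁻ ξ, (‖s.indicator F ξ‖₊ : ℝ≥0∞) ^ (2:ℝ)
          ≤ ∫⁻ ξ, s.indicator (fun _ => (A * A) ^ (2:ℝ)) ξ := by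
            refine lintegral_mono fun ξ => ?_
            by_cases h : ξ ∈ s
            · simp only [Set.indicator_of_mem h]
              exact ENNReal.rpow_le_rpow (hpt ξ) (by norm_num)
            · simp [Set.indicator_of_notMem h, ENNReal.zero_rpow_of_pos]
        _ = (A * A) ^ (2:ℝ) * volume s := by
            rw [lintegral_indicator hs, setLIntegral_const]
    rw [h1]
    calc (∫⁻ ξ, (‖s.indicator F ξ‖₊ : ℝ≥0∞) ^ (2:ℝ)) ^ ((1:ℝ)/2)
        ≤ (((A * A) ^ (2:ℝ)) * volume s) ^ ((1:ℝ)/2) :=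
          ENNReal.rpow_le_rpow h2 (by norm_num)
      _ = (A * A) * (volume s) ^ ((1:ℝ)/2) := by
          rw [ENNReal.mul_rpow_of_nonneg _ _ (by norm_num), ← ENNReal.rpow_mul]
          norm_num
  -- final combination
  have hvol' : (volume s) ^ ((1:ℝ)/2)
      ≤ ENNReal.ofReal (Real.sqrt (8 * c) * (r * N₀) ^ ((1:ℝ)/2)) := by
    calc (volume s) ^ ((1:ℝ)/2)
        ≤ (ENNReal.ofReal (8 * c * (r * N₀))) ^ ((1:ℝ)/2) :=
          ENNReal.rpow_le_rpow hvol (by norm_num)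
      _ = ENNReal.ofReal ((8 * c * (r * N₀)) ^ ((1:ℝ)/2)) :=
          ENNReal.ofReal_rpow_of_nonneg (by positivity) (by norm_num)
      _ = ENNReal.ofReal (Real.sqrt (8 * c) * (r * N₀) ^ ((1:ℝ)/2)) := by
          rw [Real.mul_rpow (by positivity) (by positivity),
            Real.sqrt_eq_rpow]
  calc eLpNorm (s.indicator F) 2 volume
      ≤ (A * A) * (volume s) ^ ((1:ℝ)/2) := hA2
    _ ≤ (A * A) * ENNReal.ofReal (Real.sqrt (8 * c) * (r * N₀) ^ ((1:ℝ)/2)) :=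
        mul_le_mul_right hvol' _
    _ = ENNReal.ofReal (Real.sqrt (8 * c) * (r * N₀) ^ ((1:ℝ)/2)) * (A * A) := mul_comm _ _


end
end

section
/- Suppose ε > 0 and C > 0 are constants, and suppose that for every initial datum with size D(0) ≥ 1 a solution exists on [0,T] whenever T^{1/2}(1+D(0)) = ε, and moreover sup_{0≤t≤T} D(t) ≤ D(0) + C T^{1/2}. Then iterating: as long as D(t) ≤ 2D(0), the solution extends by the uniform time increment T given by T^{1/2}(1+2D(0)) = ε, and letting n be the smallest integer with nCT^{1/2} > D(0), the solution exists on [0, nT] with nT > ε/(3C). In particular, since ε/(3C) is independent of D(0), the solution extends globally in time. -/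
/- STATEMENT 19 (Colliander–Holmer–Tzirakis iteration scheme): abstractly, `sol t`
   means "the solution exists on [0,t]" and `D t` is the controlling data norm
   (assumed ≥ 1 throughout).  Local existence hypothesis: from any time t₀ where the
   solution exists, if T^{1/2}(1+D(t₀)) ≤ ε then the solution extends to t₀+T and
   D grows by at most C·T^{1/2} on [t₀, t₀+T].  Conclusion: with T determined by
   T^{1/2}(1+2D(0)) = ε and n the smallest integer with nCT^{1/2} > D(0), the
   solution exists on [0, nT] and nT > ε/(3C), a bound independent of D(0). -/

theorem cht_iteration (ε C : ℝ) (hε : 0 < ε) (hC : 0 < C)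
    (sol : ℝ → Prop) (D : ℝ → ℝ)
    (hsol0 : sol 0)
    (hD1 : ∀ t : ℝ, 1 ≤ D t)
    (hlocal : ∀ t₀ T : ℝ, 0 ≤ t₀ → 0 < T → sol t₀ →
      Real.sqrt T * (1 + D t₀) ≤ ε →
      sol (t₀ + T) ∧ ∀ t : ℝ, t₀ ≤ t → t ≤ t₀ + T → D t ≤ D t₀ + C * Real.sqrt T) :
    ∀ T : ℝ, 0 < T → Real.sqrt T * (1 + 2 * D 0) = ε →
      ∀ n : ℕ, (∀ m : ℕ, m < n → (m : ℝ) * (C * Real.sqrt T) ≤ D 0) →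
        D 0 < (n : ℝ) * (C * Real.sqrt T) →
        sol ((n : ℝ) * T) ∧ ε / (3 * C) < (n : ℝ) * T := by
  intro T hT hTε n hm hn
  have hsT : 0 < Real.sqrt T := Real.sqrt_pos.mpr hT
  have key : ∀ k : ℕ, k ≤ n →
      sol ((k : ℝ) * T) ∧ D ((k : ℝ) * T) ≤ D 0 + (k : ℝ) * (C * Real.sqrt T) := by
    intro k
    induction k with
    | zero => intro _; constructor <;> simp [hsol0]
    | succ k ih =>
      intro hk
      have hkn : k < n := Nat.lt_of_succ_le hk
      obtain ⟨hs, hD⟩ := ih hkn.le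
      have hkD : (k : ℝ) * (C * Real.sqrt T) ≤ D 0 := hm k hkn
      have hbound : Real.sqrt T * (1 + D ((k : ℝ) * T)) ≤ ε := by
        calc Real.sqrt T * (1 + D ((k : ℝ) * T))
            ≤ Real.sqrt T * (1 + 2 * D 0) := by
              apply mul_le_mul_of_nonneg_left _ hsT.le
              linarith
          _ = ε := hTε
      have ht0 : (0 : ℝ) ≤ (k : ℝ) * T := by positivity
      obtain ⟨hs', hD'⟩ := hlocal ((k : ℝ) * T) T ht0 hT hs hbound
      have hcast : ((k + 1 : ℕ) : ℝ) * T = (k : ℝ) * T + T := by push_cast; ring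
      constructor
      · rw [hcast]; exact hs'
      · have h1 : (k : ℝ) * T ≤ ((k + 1 : ℕ) : ℝ) * T := by
          rw [hcast]; linarith
        have h2 : ((k + 1 : ℕ) : ℝ) * T ≤ (k : ℝ) * T + T := hcast.le
        have := hD' (((k + 1 : ℕ) : ℝ) * T) h1 h2
        push_cast at this ⊢
        linarith
  refine ⟨(key n le_rfl).1, ?_⟩
  have hD0 := hD1 0
  have hsq : Real.sqrt T * Real.sqrt T = T := Real.mul_self_sqrt hT.le
  have hε3 : ε ≤ 3 * Real.sqrt T * D 0 := by nlinarith
  have : ε < 3 * C * ((n : ℝ) * T) := by nlinarith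
  rw [div_lt_iff₀ (by linarith)]
  linarith
end
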